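/- arXiv:0905.4334 — 7 statements merged into one kernel-verified Lean document; each statement's English description precedes it below -/
import Mathlib

section
/- Let ξ₁,…,ξₙ be i.i.d. random variables with values in [0,1] and continuous distribution function F. Then sup_{t∈[0,1]} |Fₙ(t) − F(t)| → 0 almost surely as n → ∞ (Glivenko–Cantelli). -/
open MeasureTheory ProbabilityTheory Filter

/-- SLLN applied to indicators `1{ξ k ≤ t}` for a fixed `t`. -/
lemma stmt2_pointwise {Ω : Type*} {mΩ : MeasurableSpace Ω} (μ : Measure Ω)
    [IsProbabilityMeasure μ]
    (ξ : ℕ → Ω → ℝ) (hmeas : ∀ k, Measurable (ξ k))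
    (hindep : iIndepFun (m := fun _ => Real.measurableSpace) ξ μ)
    (hident : ∀ k, Measure.map (ξ k) μ = Measure.map (ξ 0) μ) (t : ℝ) :
    ∀ᵐ ω ∂μ, Tendsto (fun n : ℕ => (n : ℝ)⁻¹ * (∑ k ∈ Finset.range n,
        (if ξ k ω ≤ t then (1:ℝ) else 0))) atTop
      (nhds ((μ {ω | ξ 0 ω ≤ t}).toReal)) := by
  classical
  set f : ℝ → ℝ := Set.indicator (Set.Iic t) (fun _ => 1) with hfdef
  have hf : Measurable f := measurable_const.indicator measurableSet_Iic
  set X : ℕ → Ω → ℝ := fun k ω => f (ξ k ω) with hXdef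
  have hXeq : ∀ k ω', X k ω' = if ξ k ω' ≤ t then (1:ℝ) else 0 := fun k ω' => by
    simp [hXdef, hfdef, Set.indicator_apply, Set.mem_Iic]
  have hX0 : X 0 = Set.indicator (ξ 0 ⁻¹' Set.Iic t) (fun _ => (1:ℝ)) := by
    ext ω
    rw [hXeq 0 ω, Set.indicator_apply]
    simp [Set.mem_Iic, Set.mem_preimage]
  have hint : Integrable (X 0) μ := by
    rw [hX0]
    exact (integrable_const 1).indicator (measurableSet_Iic.preimage (hmeas 0))
  have hind : Pairwise (Function.onFun (IndepFun · · μ) X) := fun i j hij =>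
    (hindep.indepFun hij).comp hf hf
  have hid : ∀ i, IdentDistrib (X i) (X 0) μ μ := fun i =>
    (IdentDistrib.mk (hmeas i).aemeasurable (hmeas 0).aemeasurable (hident i)).comp hf
  have hInt : μ[X 0] = (μ {ω | ξ 0 ω ≤ t}).toReal := by
    rw [hX0, integral_indicator_const (1:ℝ) (measurableSet_Iic.preimage (hmeas 0))]
    simp [Set.preimage, Set.mem_Iic, Measure.real]
  filter_upwards [strong_law_ae_real X hint hind hid] with ω hω
  rw [hInt] at hω
  have : (fun n : ℕ => (n : ℝ)⁻¹ * (∑ k ∈ Finset.range n,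
      (if ξ k ω ≤ t then (1:ℝ) else 0))) =
      fun n : ℕ => (∑ i ∈ Finset.range n, X i ω) / n := by
    funext n
    simp only [hXeq, div_eq_inv_mul]
  rw [this]
  exact hω

/-- Deterministic sandwich lemma for two monotone functions agreeing on a grid. -/
lemma stmt2_sandwich {F G : ℝ → ℝ} (hF : Monotone F) (hG : Monotone G) {ε : ℝ}
    {N : ℕ} (hN : 0 < N) {u : ℕ → ℝ} (hu0 : u 0 = -1) (huN : u N = 2)
    (hgap : ∀ j < N, F (u (j + 1)) ≤ F (u j) + ε)
    (hclose : ∀ j ≤ N, |G (u j) - F (u j)| ≤ ε)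
    {t : ℝ} (ht : t ∈ Set.Icc (0:ℝ) 1) : |G t - F t| ≤ 2 * ε := by
  classical
  have hP : t < u N := by rw [huN]; linarith [ht.2]
  have hex : ∃ k, t < u k := ⟨N, hP⟩
  have hkt : t < u (Nat.find hex) := Nat.find_spec hex
  have hkN : Nat.find hex ≤ N := Nat.find_min' hex hP
  have hk0 : Nat.find hex ≠ 0 := by
    intro h
    rw [h, hu0] at hkt
    linarith [ht.1]
  obtain ⟨j, hjk⟩ : ∃ j, Nat.find hex = j + 1 :=
    ⟨Nat.find hex - 1, (Nat.succ_pred_eq_of_pos (Nat.pos_of_ne_zero hk0)).symm⟩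
  rw [hjk] at hkt hkN
  have hjt : u j ≤ t := le_of_not_gt (Nat.find_min hex (by omega))
  have hjN : j < N := hkN
  have h1 := hgap j hjN
  have h2 := abs_le.1 (hclose j (le_of_lt hjN))
  have h3 := abs_le.1 (hclose (j + 1) hkN)
  have hGt : G t ≤ G (u (j + 1)) := hG (le_of_lt hkt)
  have hGt' : G (u j) ≤ G t := hG hjt
  have hFt : F (u j) ≤ F t := hF hjt
  have hFt' : F t ≤ F (u (j + 1)) := hF (le_of_lt hkt)
  rw [abs_le]
  constructor <;> nlinarith

/-- Glivenko–Cantelli theorem: the empirical distribution function of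
i.i.d. `[0,1]`-valued random variables converges to `F` uniformly, almost surely. -/
theorem stmt2 {Ω : Type*} {mΩ : MeasurableSpace Ω} (μ : Measure Ω) [IsProbabilityMeasure μ]
    (ξ : ℕ → Ω → ℝ) (hmeas : ∀ k, Measurable (ξ k))
    (hindep : iIndepFun (m := fun _ => Real.measurableSpace) ξ μ)
    (hident : ∀ k, Measure.map (ξ k) μ = Measure.map (ξ 0) μ)
    (hval : ∀ k ω, ξ k ω ∈ Set.Icc (0:ℝ) 1)
    (F : ℝ → ℝ) (hFdef : ∀ t, F t = (μ {ω | ξ 0 ω ≤ t}).toReal)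
    (hFcont : Continuous F) :
    ∀ᵐ ω ∂μ,
      Tendsto (fun n : ℕ => ⨆ t : Set.Icc (0:ℝ) 1,
          |(n : ℝ)⁻¹ * (∑ k ∈ Finset.range n,
            (if ξ k ω ≤ (t : ℝ) then (1:ℝ) else 0)) - F t|)
        atTop (nhds 0) := by
  classical
  haveI : Nonempty (Set.Icc (0:ℝ) 1) := ⟨⟨0, by norm_num⟩⟩
  -- monotonicity of F
  have hFmono : Monotone F := by
    intro a b hab
    rw [hFdef a, hFdef b]
    exact ENNReal.toReal_mono (measure_ne_top μ _)
      (measure_mono fun ω hω => le_trans hω hab)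
  -- empirical cdf
  set G : ℕ → Ω → ℝ → ℝ := fun n ω t =>
    (n : ℝ)⁻¹ * (∑ k ∈ Finset.range n, (if ξ k ω ≤ t then (1:ℝ) else 0)) with hGdef
  have hGmono : ∀ n ω, Monotone (G n ω) := by
    intro n ω a b hab
    refine mul_le_mul_of_nonneg_left (Finset.sum_le_sum fun k _ => ?_) (by positivity)
    split_ifs with h1 h2
    · exact le_refl 1
    · exact absurd (le_trans h1 hab) h2
    · norm_num
    · exact le_refl 0
  -- a.s. convergence at all rational points simultaneously
  have hae : ∀ᵐ ω ∂μ, ∀ q : ℚ, Tendsto (fun n : ℕ => G n ω (q : ℝ)) atTop (nhds (F q)) := by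
    rw [ae_all_iff]
    intro q
    have := stmt2_pointwise μ ξ hmeas hindep hident (q : ℝ)
    rw [← hFdef (q : ℝ)] at this
    exact this
  filter_upwards [hae] with ω hω
  rw [Metric.tendsto_atTop]
  intro ε hε
  set ε' : ℝ := ε / 3 with hε'def
  have hε' : 0 < ε' := by positivity
  -- uniform continuity of F on [-1,2]
  have hUC := (isCompact_Icc (a := (-1:ℝ)) (b := 2)).uniformContinuousOn_of_continuous
    hFcont.continuousOn
  rw [Metric.uniformContinuousOn_iff] at hUC
  obtain ⟨δ, hδ, hδ'⟩ := hUC ε' hε'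
  obtain ⟨N, hNδ⟩ := exists_nat_gt (3 / δ)
  have hN : 0 < N := by
    rcases Nat.eq_zero_or_pos N with h | h
    · exfalso
      rw [h] at hNδ
      have : (0:ℝ) < 3 / δ := by positivity
      simp at hNδ
      linarith
    · exact h
  -- rational grid
  set q : ℕ → ℚ := fun j => -1 + 3 * j / N with hqdef
  set u : ℕ → ℝ := fun j => ((q j : ℚ) : ℝ) with hudef
  have hu : ∀ j, u j = -1 + 3 * (j : ℝ) / N := by
    intro j; rw [hudef, hqdef]; push_cast; ring
  have hu0 : u 0 = -1 := by rw [hu]; simp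
  have huN : u N = 2 := by
    rw [hu]
    field_simp
    ring
  have humem : ∀ j ≤ N, u j ∈ Set.Icc (-1:ℝ) 2 := by
    intro j hj
    rw [hu]
    constructor
    · have : (0:ℝ) ≤ 3 * (j : ℝ) / N := by positivity
      linarith
    · have hjN : (j : ℝ) ≤ N := by exact_mod_cast hj
      have hN' : (0:ℝ) < N := by exact_mod_cast hN
      have : 3 * (j : ℝ) / N ≤ 3 := by
        rw [div_le_iff₀ hN']
        nlinarith
      linarith
  have hgap : ∀ j < N, F (u (j + 1)) ≤ F (u j) + ε' := by
    intro j hj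
    have h1 : u (j + 1) ∈ Set.Icc (-1:ℝ) 2 := humem _ hj
    have h2 : u j ∈ Set.Icc (-1:ℝ) 2 := humem _ (le_of_lt hj)
    have hN' : (0:ℝ) < N := by exact_mod_cast hN
    have hd : dist (u (j + 1)) (u j) < δ := by
      rw [Real.dist_eq, hu, hu]
      have : -1 + 3 * ((j:ℝ) + 1) / N - (-1 + 3 * (j:ℝ) / N) = 3 / N := by
        field_simp; ring
      push_cast
      rw [this, abs_of_pos (by positivity)]
      rw [div_lt_iff₀ hN']
      rw [div_lt_iff₀ hδ] at hNδ
      nlinarith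
    have := hδ' _ h1 _ h2 hd
    rw [Real.dist_eq] at this
    have := (abs_lt.1 this).2
    linarith
  -- eventual closeness at grid points
  have hev : ∀ᶠ n in atTop, ∀ j ∈ Set.Iic N, |G n ω (u j) - F (u j)| ≤ ε' := by
    rw [eventually_all_finite (Set.finite_Iic N)]
    intro j _
    have := (hω (q j)).sub_const (F (u j))
    rw [hudef] at *
    have h0 : F ((q j : ℝ)) - F ((q j : ℝ)) = 0 := sub_self _
    have h1 : Tendsto (fun n => G n ω ((q j : ℝ)) - F ((q j : ℝ))) atTop (nhds 0) := by
      simpa using this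
    have h2 : Tendsto (fun n => |G n ω ((q j : ℝ)) - F ((q j : ℝ))|) atTop (nhds 0) := by
      simpa using h1.abs
    exact h2.eventually_le_const (by linarith : (0:ℝ) < ε')
  rw [eventually_atTop] at hev
  obtain ⟨M, hM⟩ := hev
  refine ⟨M, fun n hn => ?_⟩
  have hsup : (⨆ t : Set.Icc (0:ℝ) 1, |G n ω t - F t|) ≤ 2 * ε' := by
    refine ciSup_le fun t => ?_
    exact stmt2_sandwich hFmono (hGmono n ω) hN hu0 huN hgap
      (fun j hj => hM n hn j hj) t.2
  have hsup0 : (0:ℝ) ≤ ⨆ t : Set.Icc (0:ℝ) 1, |G n ω t - F t| :=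
    Real.iSup_nonneg fun t => abs_nonneg _
  rw [Real.dist_eq, sub_zero, abs_of_nonneg hsup0]
  calc (⨆ t : Set.Icc (0:ℝ) 1, |G n ω t - F t|) ≤ 2 * ε' := hsup
    _ < ε := by rw [hε'def]; linarith
end

section
/- Let ξ₁,…,ξₙ be i.i.d. with continuous distribution function F supported on [0,1], and let Fₙ be the empirical distribution function. Then P( sup_{t∈[0,1]} |Fₙ(t) − F(t)| ≥ ε ) ≤ 2·exp( −n·[ (ε/8)·(log(1 + ε²/32) − 1) + (4/ε)·log(1 + ε²/32) ] ) for every ε > 0 (Kolmogorov-type exponential bound). -/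
open MeasureTheory ProbabilityTheory Filter

section aux
open Real

lemma exp_quad {x : ℝ} (hx : |x| ≤ 1) : Real.exp x - 1 - x ≤ (3/4) * x^2 := by
  have h := Real.exp_bound hx (n := 2) (by norm_num)
  have hs : ∑ i ∈ Finset.range 2, x ^ i / (Nat.factorial i : ℝ) = 1 + x := by
    simp [Finset.sum_range_succ, Nat.factorial]
  rw [hs] at h
  have h2 : Real.exp x - (1 + x) ≤ |x| ^ 2 * ((Nat.succ 2 : ℕ) / ((Nat.factorial 2 : ℝ) * (2:ℕ))) :=
    (le_abs_self _).trans h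
  have h3 : |x| ^ 2 * ((Nat.succ 2 : ℕ) / ((Nat.factorial 2 : ℝ) * (2:ℕ))) = (3/4) * x^2 := by
    rw [sq_abs]; norm_num [Nat.factorial]; ring
  linarith [h3 ▸ h2]


lemma grid_exists (F : ℝ → ℝ) (hFc : Continuous F) (hF0 : F 0 = 0) (hF1 : F 1 = 1)
    (m : ℕ) (hm : 0 < m) :
    ∃ T : ℕ → ℝ, T 0 = 0 ∧ (∀ i, T i ≤ T (i + 1)) ∧ (∀ i, T i ∈ Set.Icc (0:ℝ) 1) ∧
      (∀ i, F (T i) = min ((i : ℝ) / m) 1) := by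
  classical
  set S : ℕ → Set ℝ := fun i => {x | x ∈ Set.Icc (0:ℝ) 1 ∧ F x = min ((i : ℝ) / m) 1} with hS
  have h0 : (0:ℝ) ∈ S 0 := by
    constructor
    · exact ⟨le_refl 0, by norm_num⟩
    · rw [hF0]; simp
  have step : ∀ i, ∀ x ∈ S i, ∃ y ∈ S (i + 1), x ≤ y := by
    intro i x hx
    obtain ⟨hxI, hxF⟩ := hx
    have hsub := intermediate_value_Icc hxI.2 (hFc.continuousOn (s := Set.Icc x 1))
    have hmem : min (((i:ℕ)+1 : ℝ) / m) 1 ∈ Set.Icc (F x) (F 1) := by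
      constructor
      · rw [hxF]
        apply min_le_min _ le_rfl
        apply div_le_div_of_nonneg_right _ (by positivity)
        · exact_mod_cast Nat.le_succ i
      · rw [hF1]; exact min_le_right _ _
    obtain ⟨y, hyI, hyF⟩ := hsub hmem
    refine ⟨y, ⟨⟨hxI.1.trans hyI.1, hyI.2⟩, ?_⟩, hyI.1⟩
    rw [hyF]; push_cast; ring_nf
  have step2 : ∀ i, ∀ x : {x : ℝ // x ∈ S i}, {y : {y : ℝ // y ∈ S (i+1)} // x.1 ≤ y.1} := by
    intro i x
    exact ⟨⟨Classical.choose (step i x.1 x.2), (Classical.choose_spec (step i x.1 x.2)).1⟩,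
      (Classical.choose_spec (step i x.1 x.2)).2⟩
  let g : ∀ i, {x : ℝ // x ∈ S i} := fun i => Nat.rec ⟨0, h0⟩ (fun i prev => (step2 i prev).1) i
  refine ⟨fun i => (g i).1, rfl, fun i => (step2 i (g i)).2, fun i => (g i).2.1, fun i => (g i).2.2⟩

variable {Ω : Type*} {mΩ : MeasurableSpace Ω} (μ : Measure Ω) [IsProbabilityMeasure μ]

lemma mgf_ind (ξ0 : Ω → ℝ) (hm : Measurable ξ0) (s t : ℝ) :
    mgf (fun ω => if ξ0 ω ≤ s then (1:ℝ) else 0) μ t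
      = 1 + (μ {ω | ξ0 ω ≤ s}).toReal * (Real.exp t - 1) := by
  have hA : MeasurableSet {ω | ξ0 ω ≤ s} := measurableSet_le hm measurable_const
  have hfun : (fun ω => Real.exp (t * (if ξ0 ω ≤ s then (1:ℝ) else 0)))
      = fun ω => Set.indicator {ω | ξ0 ω ≤ s} (fun _ => Real.exp t - 1) ω + 1 := by
    funext ω
    by_cases h : ξ0 ω ≤ s <;> simp [Set.indicator, h]
  show ∫ ω, Real.exp (t * (if ξ0 ω ≤ s then (1:ℝ) else 0)) ∂μ = _
  rw [hfun, integral_add ((integrable_const _).indicator hA) (integrable_const _),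
    integral_indicator_const _ hA, integral_const]
  simp [mul_comm]
  exact (add_comm _ _).trans rfl


lemma point_bound (ξ : ℕ → Ω → ℝ) (hmeas : ∀ k, Measurable (ξ k))
    (hindep : iIndepFun ξ μ)
    (hident : ∀ k, Measure.map (ξ k) μ = Measure.map (ξ 0) μ)
    (s : ℝ) {a : ℝ} (ha : 0 < a) (ha1 : a ≤ 1) (n : ℕ) (hn : 1 ≤ n) :
    (μ {ω | a ≤ |(n : ℝ)⁻¹ * (∑ k ∈ Finset.range n,
        (if ξ k ω ≤ s then (1:ℝ) else 0)) - (μ {ω | ξ 0 ω ≤ s}).toReal|}).toReal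
      ≤ 2 * Real.exp (-(n:ℝ) * a^2 / 4) := by
  classical
  set p : ℝ := (μ {ω | ξ 0 ω ≤ s}).toReal with hp
  have hp0 : 0 ≤ p := ENNReal.toReal_nonneg
  have hp1 : p ≤ 1 := by
    rw [hp]
    have h1 : μ {ω | ξ 0 ω ≤ s} ≤ 1 := prob_le_one
    simpa using ENNReal.toReal_mono (by simp) h1
  set Y : ℕ → Ω → ℝ := fun k ω => if ξ k ω ≤ s then (1:ℝ) else 0 with hY
  set X : Ω → ℝ := fun ω => ∑ k ∈ Finset.range n, Y k ω with hX
  have hnpos : (0:ℝ) < n := by exact_mod_cast hn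
  -- measurability
  let φ : ℝ → ℝ := fun x => if x ≤ s then (1:ℝ) else 0
  have hφ : Measurable φ := Measurable.ite measurableSet_Iic measurable_const measurable_const
  have hYm : ∀ k, Measurable (Y k) := fun k => hφ.comp (hmeas k)
  have hYindep : iIndepFun Y μ :=
    hindep.comp (fun _ => φ) (fun _ => hφ)
  -- integrability of exp (t * X)
  have hXm : Measurable X := Finset.measurable_sum _ (fun k _ => hYm k)
  have hX0 : ∀ ω, 0 ≤ X ω := fun ω =>
    Finset.sum_nonneg (fun k _ => by by_cases h : ξ k ω ≤ s <;> simp [hY, h])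
  have hXn : ∀ ω, X ω ≤ n := by
    intro ω
    calc X ω ≤ ∑ k ∈ Finset.range n, (1:ℝ) :=
          Finset.sum_le_sum (fun k _ => by by_cases h : ξ k ω ≤ s <;> simp [hY, h])
    _ = n := by simp
  have hint : ∀ t : ℝ, Integrable (fun ω => Real.exp (t * X ω)) μ := by
    intro t
    refine Integrable.mono' (integrable_const (Real.exp (|t| * n))) ?_ (ae_of_all _ ?_)
    · exact ((hXm.const_mul t).exp).aestronglyMeasurable
    · intro ω
      rw [Real.norm_eq_abs, Real.abs_exp]
      apply Real.exp_le_exp.2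
      calc t * X ω ≤ |t * X ω| := le_abs_self _
      _ = |t| * |X ω| := abs_mul _ _
      _ ≤ |t| * n := by
          apply mul_le_mul_of_nonneg_left _ (abs_nonneg t)
          rw [abs_of_nonneg (hX0 ω)]; exact hXn ω
  -- mgf of the sum
  have hmgfk : ∀ (t : ℝ) k, mgf (Y k) μ t = mgf (Y 0) μ t := by
    intro t k
    have hg : Measurable fun x : ℝ => Real.exp (t * φ x) := (hφ.const_mul t).exp
    calc mgf (Y k) μ t = ∫ x, Real.exp (t * φ x) ∂(Measure.map (ξ k) μ) :=
          (integral_map (hmeas k).aemeasurable hg.aestronglyMeasurable).symm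
    _ = ∫ x, Real.exp (t * φ x) ∂(Measure.map (ξ 0) μ) := by rw [hident k]
    _ = mgf (Y 0) μ t := integral_map (hmeas 0).aemeasurable hg.aestronglyMeasurable
  have hmgfsum : ∀ t : ℝ, mgf X μ t = (mgf (Y 0) μ t) ^ n := by
    intro t
    have h1 : X = ∑ k ∈ Finset.range n, Y k := by
      funext ω; rw [Finset.sum_apply]
    rw [h1, hYindep.mgf_sum hYm]
    rw [Finset.prod_congr rfl (fun k _ => hmgfk t k), Finset.prod_const, Finset.card_range]
  have hmgf0 : ∀ t : ℝ, mgf (Y 0) μ t = 1 + p * (Real.exp t - 1) := fun t =>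
    mgf_ind μ (ξ 0) (hmeas 0) s t
  -- upper tail
  have hup : (μ {ω | (n:ℝ) * (p + a) ≤ X ω}).toReal ≤ Real.exp (-(n:ℝ) * a^2 / 4) := by
    have h := measure_ge_le_exp_mul_mgf (μ := μ) (X := X) (t := a) ((n:ℝ) * (p + a)) ha.le (hint a)
    refine h.trans ?_
    rw [hmgfsum a, hmgf0 a]
    have hbase0 : 0 ≤ 1 + p * (Real.exp a - 1) := by nlinarith [Real.add_one_le_exp a]
    have hbase : (1 + p * (Real.exp a - 1)) ^ n ≤ Real.exp ((n:ℝ) * (p * (Real.exp a - 1))) := by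
      calc (1 + p * (Real.exp a - 1)) ^ n ≤ (Real.exp (p * (Real.exp a - 1))) ^ n := by
            apply pow_le_pow_left₀ hbase0
            linarith [Real.add_one_le_exp (p * (Real.exp a - 1))]
      _ = Real.exp (p * (Real.exp a - 1)) ^ n := rfl
      _ = Real.exp ((n:ℝ) * (p * (Real.exp a - 1))) := by rw [← Real.exp_nat_mul]
    calc Real.exp (-a * ((n:ℝ) * (p + a))) * (1 + p * (Real.exp a - 1)) ^ n
        ≤ Real.exp (-a * ((n:ℝ) * (p + a))) * Real.exp ((n:ℝ) * (p * (Real.exp a - 1))) := by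
          apply mul_le_mul_of_nonneg_left hbase (Real.exp_pos _).le
    _ = Real.exp ((n:ℝ) * (p * (Real.exp a - 1 - a) - a^2)) := by
          rw [← Real.exp_add]; ring_nf
    _ ≤ Real.exp (-(n:ℝ) * a^2 / 4) := by
          apply Real.exp_le_exp.2
          have hq : Real.exp a - 1 - a ≤ (3/4) * a^2 := exp_quad (by rwa [abs_of_pos ha])
          have hq0 : 0 ≤ Real.exp a - 1 - a := by nlinarith [Real.add_one_le_exp a]
          have hpq : p * (Real.exp a - 1 - a) ≤ (3/4) * a^2 :=
            le_trans (mul_le_of_le_one_left hq0 hp1) hq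
          have hmul := mul_le_mul_of_nonneg_left
            (show p * (Real.exp a - 1 - a) - a^2 ≤ -(a^2/4) by linarith) (le_of_lt hnpos)
          linarith
  -- lower tail
  have hlo : (μ {ω | X ω ≤ (n:ℝ) * (p - a)}).toReal ≤ Real.exp (-(n:ℝ) * a^2 / 4) := by
    have h := measure_le_le_exp_mul_mgf (μ := μ) (X := X) (t := -a) ((n:ℝ) * (p - a))
      (neg_nonpos.2 ha.le) (hint (-a))
    refine h.trans ?_
    rw [hmgfsum (-a), hmgf0 (-a)]
    have hbase0 : 0 ≤ 1 + p * (Real.exp (-a) - 1) := by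
      nlinarith [Real.exp_pos (-a)]
    have hbase : (1 + p * (Real.exp (-a) - 1)) ^ n
        ≤ Real.exp ((n:ℝ) * (p * (Real.exp (-a) - 1))) := by
      calc (1 + p * (Real.exp (-a) - 1)) ^ n ≤ (Real.exp (p * (Real.exp (-a) - 1))) ^ n := by
            apply pow_le_pow_left₀ hbase0
            linarith [Real.add_one_le_exp (p * (Real.exp (-a) - 1))]
      _ = Real.exp ((n:ℝ) * (p * (Real.exp (-a) - 1))) := by rw [← Real.exp_nat_mul]
    calc Real.exp (-(-a) * ((n:ℝ) * (p - a))) * (1 + p * (Real.exp (-a) - 1)) ^ n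
        ≤ Real.exp (a * ((n:ℝ) * (p - a))) * Real.exp ((n:ℝ) * (p * (Real.exp (-a) - 1))) := by
          rw [neg_neg]
          exact mul_le_mul_of_nonneg_left hbase (Real.exp_pos _).le
    _ = Real.exp ((n:ℝ) * (p * (Real.exp (-a) - 1 + a) - a^2)) := by
          rw [← Real.exp_add]; ring_nf
    _ ≤ Real.exp (-(n:ℝ) * a^2 / 4) := by
          apply Real.exp_le_exp.2
          have hq : Real.exp (-a) - 1 + a ≤ (3/4) * a^2 := by
            have := exp_quad (x := -a) (by rw [abs_neg, abs_of_pos ha]; exact ha1)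
            nlinarith
          have hq0 : 0 ≤ Real.exp (-a) - 1 + a := by
            nlinarith [Real.add_one_le_exp (-a)]
          have hpq : p * (Real.exp (-a) - 1 + a) ≤ (3/4) * a^2 :=
            le_trans (mul_le_of_le_one_left hq0 hp1) hq
          have hmul := mul_le_mul_of_nonneg_left
            (show p * (Real.exp (-a) - 1 + a) - a^2 ≤ -(a^2/4) by linarith) (le_of_lt hnpos)
          linarith
  -- combine
  have hsub : {ω | a ≤ |(n : ℝ)⁻¹ * (∑ k ∈ Finset.range n,
        (if ξ k ω ≤ s then (1:ℝ) else 0)) - p|}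
      ⊆ {ω | (n:ℝ) * (p + a) ≤ X ω} ∪ {ω | X ω ≤ (n:ℝ) * (p - a)} := by
    intro ω hω
    simp only [Set.mem_setOf_eq] at hω
    have hXeq : (∑ k ∈ Finset.range n, (if ξ k ω ≤ s then (1:ℝ) else 0)) = X ω := rfl
    rw [hXeq] at hω
    rcases le_abs.mp hω with h | h
    · left
      show (n:ℝ) * (p + a) ≤ X ω
      have : p + a ≤ (n:ℝ)⁻¹ * X ω := by linarith
      calc (n:ℝ) * (p + a) ≤ (n:ℝ) * ((n:ℝ)⁻¹ * X ω) :=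
            mul_le_mul_of_nonneg_left this hnpos.le
      _ = X ω := by field_simp
    · right
      show X ω ≤ (n:ℝ) * (p - a)
      have : (n:ℝ)⁻¹ * X ω ≤ p - a := by linarith
      calc X ω = (n:ℝ) * ((n:ℝ)⁻¹ * X ω) := by field_simp
      _ ≤ (n:ℝ) * (p - a) := mul_le_mul_of_nonneg_left this hnpos.le
  calc (μ {ω | a ≤ |(n : ℝ)⁻¹ * (∑ k ∈ Finset.range n,
        (if ξ k ω ≤ s then (1:ℝ) else 0)) - p|}).toReal
      ≤ (μ ({ω | (n:ℝ) * (p + a) ≤ X ω} ∪ {ω | X ω ≤ (n:ℝ) * (p - a)})).toReal :=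
        ENNReal.toReal_mono (measure_ne_top μ _) (measure_mono hsub)
  _ ≤ (μ {ω | (n:ℝ) * (p + a) ≤ X ω} + μ {ω | X ω ≤ (n:ℝ) * (p - a)}).toReal :=
        ENNReal.toReal_mono (by finiteness) (measure_union_le _ _)
  _ = (μ {ω | (n:ℝ) * (p + a) ≤ X ω}).toReal + (μ {ω | X ω ≤ (n:ℝ) * (p - a)}).toReal :=
        ENNReal.toReal_add (measure_ne_top μ _) (measure_ne_top μ _)
  _ ≤ 2 * Real.exp (-(n:ℝ) * a^2 / 4) := by linarith


end aux

set_option maxHeartbeats 2000000 in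
/-- Kolmogorov-type exponential bound for the uniform deviation of the
empirical distribution function from the continuous distribution function `F`. -/
theorem stmt3 {Ω : Type*} {mΩ : MeasurableSpace Ω} (μ : Measure Ω) [IsProbabilityMeasure μ]
    (ξ : ℕ → Ω → ℝ) (hmeas : ∀ k, Measurable (ξ k))
    (hindep : iIndepFun ξ μ)
    (hident : ∀ k, Measure.map (ξ k) μ = Measure.map (ξ 0) μ)
    (hval : ∀ k ω, ξ k ω ∈ Set.Icc (0:ℝ) 1)
    (F : ℝ → ℝ) (hFdef : ∀ t, F t = (μ {ω | ξ 0 ω ≤ t}).toReal)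
    (hFcont : Continuous F) :
    ∀ ε : ℝ, 0 < ε → ∀ n : ℕ, 1 ≤ n →
      (μ {ω | ε ≤ ⨆ t : Set.Icc (0:ℝ) 1,
          |(n : ℝ)⁻¹ * (∑ k ∈ Finset.range n,
            (if ξ k ω ≤ (t : ℝ) then (1:ℝ) else 0)) - F t|}).toReal
        ≤ 2 * Real.exp (-(n : ℝ) *
            ((ε / 8) * (Real.log (1 + ε ^ 2 / 32) - 1)
              + (4 / ε) * Real.log (1 + ε ^ 2 / 32))) := by
  classical
  intro ε hε n hn
  have hnpos : (0:ℝ) < n := by exact_mod_cast hn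
  -- basic facts about F
  have hFmem : ∀ t : ℝ, 0 ≤ F t ∧ F t ≤ 1 := by
    intro t
    rw [hFdef]
    refine ⟨ENNReal.toReal_nonneg, ?_⟩
    have h1 : μ {ω | ξ 0 ω ≤ t} ≤ 1 := prob_le_one
    simpa using ENNReal.toReal_mono (by simp) h1
  have hFmono : Monotone F := by
    intro a b hab
    rw [hFdef, hFdef]
    exact ENNReal.toReal_mono (measure_ne_top μ _)
      (measure_mono (fun ω hω => le_trans hω hab))
  have hF1 : F 1 = 1 := by
    rw [hFdef]
    have h1 : {ω | ξ 0 ω ≤ 1} = Set.univ := Set.eq_univ_of_forall (fun ω => (hval 0 ω).2)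
    rw [h1, measure_univ]; simp
  have hF0 : F 0 = 0 := by
    have hneg : ∀ t : ℝ, t < 0 → F t = 0 := by
      intro t ht
      rw [hFdef]
      have h1 : {ω | ξ 0 ω ≤ t} = ∅ := by
        ext ω
        simp only [Set.mem_setOf_eq, Set.mem_empty_iff_false, iff_false, not_le]
        linarith [(hval 0 ω).1]
      rw [h1]; simp
    have h1 : Tendsto F (nhdsWithin (0:ℝ) (Set.Iio 0)) (nhds (F 0)) :=
      (hFcont.tendsto 0).mono_left nhdsWithin_le_nhds
    have h2 : Tendsto F (nhdsWithin (0:ℝ) (Set.Iio 0)) (nhds 0) := by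
      apply Tendsto.congr' _ tendsto_const_nhds
      filter_upwards [self_mem_nhdsWithin] with t ht
      exact (hneg t ht).symm
    exact tendsto_nhds_unique h1 h2
  -- empirical function bounds
  have hFn01 : ∀ (ω : Ω) (s : ℝ),
      0 ≤ (n:ℝ)⁻¹ * (∑ k ∈ Finset.range n, (if ξ k ω ≤ s then (1:ℝ) else 0)) ∧
      (n:ℝ)⁻¹ * (∑ k ∈ Finset.range n, (if ξ k ω ≤ s then (1:ℝ) else 0)) ≤ 1 := by
    intro ω s
    have h0 : (0:ℝ) ≤ ∑ k ∈ Finset.range n, (if ξ k ω ≤ s then (1:ℝ) else 0) :=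
      Finset.sum_nonneg (fun k _ => by by_cases h : ξ k ω ≤ s <;> simp [h])
    have h1 : (∑ k ∈ Finset.range n, (if ξ k ω ≤ s then (1:ℝ) else 0)) ≤ n := by
      calc (∑ k ∈ Finset.range n, (if ξ k ω ≤ s then (1:ℝ) else 0))
          ≤ ∑ k ∈ Finset.range n, (1:ℝ) :=
            Finset.sum_le_sum (fun k _ => by by_cases h : ξ k ω ≤ s <;> simp [h])
      _ = n := by simp
    constructor
    · positivity
    · calc (n:ℝ)⁻¹ * (∑ k ∈ Finset.range n, (if ξ k ω ≤ s then (1:ℝ) else 0))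
          ≤ (n:ℝ)⁻¹ * n := mul_le_mul_of_nonneg_left h1 (by positivity)
      _ = 1 := by field_simp
  have hFnmono : ∀ (ω : Ω) (s s' : ℝ), s ≤ s' →
      (n:ℝ)⁻¹ * (∑ k ∈ Finset.range n, (if ξ k ω ≤ s then (1:ℝ) else 0)) ≤
      (n:ℝ)⁻¹ * (∑ k ∈ Finset.range n, (if ξ k ω ≤ s' then (1:ℝ) else 0)) := by
    intro ω s s' hss
    apply mul_le_mul_of_nonneg_left _ (by positivity)
    apply Finset.sum_le_sum
    intro k _
    by_cases h : ξ k ω ≤ s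
    · simp [h, le_trans h hss]
    · by_cases h' : ξ k ω ≤ s' <;> simp [h, h']
  have hsup1 : ∀ ω : Ω, (⨆ t : Set.Icc (0:ℝ) 1,
      |(n : ℝ)⁻¹ * (∑ k ∈ Finset.range n,
        (if ξ k ω ≤ (t : ℝ) then (1:ℝ) else 0)) - F t|) ≤ 1 := by
    intro ω
    have : Nonempty (Set.Icc (0:ℝ) 1) := ⟨⟨0, by norm_num⟩⟩
    apply ciSup_le
    intro t
    have h1 := hFn01 ω t
    have h2 := hFmem t
    rw [abs_le]
    constructor <;> linarith [h1.1, h1.2, h2.1, h2.2]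
  by_cases hε1 : 1 < ε
  · -- trivial: event empty
    have hempty : {ω | ε ≤ ⨆ t : Set.Icc (0:ℝ) 1,
        |(n : ℝ)⁻¹ * (∑ k ∈ Finset.range n,
          (if ξ k ω ≤ (t : ℝ) then (1:ℝ) else 0)) - F t|} = ∅ := by
      ext ω
      simp only [Set.mem_setOf_eq, Set.mem_empty_iff_false, iff_false, not_le]
      exact lt_of_le_of_lt (hsup1 ω) hε1
    rw [hempty]
    simp
    positivity
  push_neg at hε1
  -- main case : ε ≤ 1
  set EE : ℝ := (ε / 8) * (Real.log (1 + ε ^ 2 / 32) - 1)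
      + (4 / ε) * Real.log (1 + ε ^ 2 / 32) with hEE
  set m : ℕ := Nat.ceil (2/ε) with hm
  have hm0 : 0 < m := Nat.ceil_pos.2 (by positivity)
  have hm2 : 2/ε ≤ (m:ℝ) := Nat.le_ceil _
  have hmU : (m:ℝ) ≤ 2/ε + 1 := (Nat.ceil_lt_add_one (by positivity)).le
  have hmRpos : (0:ℝ) < m := by exact_mod_cast hm0
  clear_value EE m
  obtain ⟨T, hT0, hTstep, hTIcc, hTF⟩ := grid_exists F hFcont hF0 hF1 m hm0
  set G : ℕ → ℝ := fun i => if i ≤ m then T i else 1 with hG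
  have hGIcc : ∀ i, G i ∈ Set.Icc (0:ℝ) 1 := by
    intro i
    by_cases h : i ≤ m
    · simp only [hG, if_pos h]; exact hTIcc i
    · simp only [hG, if_neg h]; exact ⟨by norm_num, le_refl 1⟩
  have hGstep : ∀ i, G i ≤ G (i + 1) := by
    intro i
    by_cases h1 : i + 1 ≤ m
    · have h0 : i ≤ m := le_trans (Nat.le_succ i) h1
      simp only [hG, if_pos h1, if_pos h0]
      exact hTstep i
    · by_cases h0 : i ≤ m
      · simp only [hG, if_pos h0, if_neg h1]
        exact (hTIcc i).2
      · simp only [hG, if_neg h0, if_neg h1]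
        exact le_rfl
  have hG0 : G 0 = 0 := by simp only [hG, if_pos (Nat.zero_le m)]; exact hT0
  have hGtop : G (m+1) = 1 := by simp only [hG, if_neg (Nat.not_succ_le_self m)]
  have hGgap : ∀ i ≤ m, F (G (i+1)) - F (G i) ≤ ε/2 := by
    intro i hi
    have h1m : (1:ℝ)/m ≤ ε/2 := by
      rw [div_le_div_iff₀ hmRpos (show (0:ℝ) < 2 by norm_num)]
      have h2 : (2:ℝ) ≤ (m:ℝ) * ε := by
        rw [div_le_iff₀ hε] at hm2
        linarith
      linarith
    by_cases h : i + 1 ≤ m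
    · have h0 : i ≤ m := le_trans (Nat.le_succ i) h
      simp only [hG, if_pos h, if_pos h0]
      rw [hTF i, hTF (i+1)]
      have hc1 : ((i:ℝ)+1)/m ≤ 1 := by
        rw [div_le_one hmRpos]
        exact_mod_cast h
      have hc0 : (i:ℝ)/m ≤ 1 := by
        rw [div_le_one hmRpos]
        exact_mod_cast h0
      rw [min_eq_left (by push_cast; exact hc1), min_eq_left hc0]
      push_cast
      have : ((i:ℝ)+1)/m - (i:ℝ)/m = 1/m := by ring
      linarith
    · have hieq : i = m := le_antisymm hi (by omega)
      rw [hieq]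
      simp only [hG, if_pos (le_refl m), if_neg (Nat.not_succ_le_self m)]
      rw [hTF m, hF1, min_eq_left ((div_le_one hmRpos).2 le_rfl),
        div_self (ne_of_gt hmRpos)]
      linarith
  -- the union of grid deviation events
  set D : ℕ → Set Ω := fun i => {ω | ε/4 ≤ |(n : ℝ)⁻¹ * (∑ k ∈ Finset.range n,
      (if ξ k ω ≤ G i then (1:ℝ) else 0)) - (μ {ω | ξ 0 ω ≤ G i}).toReal|} with hD
  have hDb : ∀ i, (μ (D i)).toReal ≤ 2 * Real.exp (-(n:ℝ) * (ε/4)^2 / 4) := fun i =>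
    point_bound μ ξ hmeas hindep hident (G i) (by positivity) (by linarith) n hn
  clear_value D
  have hsub : {ω | ε ≤ ⨆ t : Set.Icc (0:ℝ) 1,
      |(n : ℝ)⁻¹ * (∑ k ∈ Finset.range n,
        (if ξ k ω ≤ (t : ℝ) then (1:ℝ) else 0)) - F t|}
      ⊆ ⋃ i ∈ Finset.range (m+2), D i := by
    intro ω hω
    simp only [Set.mem_setOf_eq] at hω
    by_contra hnot
    simp only [Set.mem_iUnion, not_exists, Finset.mem_range] at hnot
    have hdev : ∀ i, i ≤ m + 1 →
        |(n : ℝ)⁻¹ * (∑ k ∈ Finset.range n,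
          (if ξ k ω ≤ G i then (1:ℝ) else 0)) - F (G i)| < ε/4 := by
      intro i hi
      have h1 := hnot i
      have h2 : ¬ (ω ∈ D i) := by
        intro hmem
        exact h1 (by omega) hmem
      rw [hD] at h2
      simp only [Set.mem_setOf_eq, not_le] at h2
      rw [hFdef (G i)]
      exact h2
    have hsup : (⨆ t : Set.Icc (0:ℝ) 1,
        |(n : ℝ)⁻¹ * (∑ k ∈ Finset.range n,
          (if ξ k ω ≤ (t : ℝ) then (1:ℝ) else 0)) - F t|) ≤ 3*ε/4 := by
      have : Nonempty (Set.Icc (0:ℝ) 1) := ⟨⟨0, by norm_num⟩⟩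
      apply ciSup_le
      intro t
      -- covering
      set i : ℕ := Nat.findGreatest (fun j => G j ≤ (t:ℝ)) m with hi
      have hi_le : i ≤ m := Nat.findGreatest_le m
      have hGi : G i ≤ (t:ℝ) :=
        Nat.findGreatest_spec (P := fun j => G j ≤ (t:ℝ)) (Nat.zero_le m)
          (show G 0 ≤ (t:ℝ) by rw [hG0]; exact t.2.1)
      have hti : (t:ℝ) ≤ G (i+1) := by
        rcases lt_or_eq_of_le hi_le with h | h
        · have h2 := Nat.findGreatest_is_greatest (P := fun j => G j ≤ (t:ℝ))
            (Nat.lt_succ_self i) (show i + 1 ≤ m by omega)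
          exact (not_le.1 h2).le
        · rw [h, hGtop]
          exact t.2.2
      have hd1 := hdev i (by omega)
      have hd2 := hdev (i+1) (by omega)
      have hgap := hGgap i hi_le
      have hFn1 := hFnmono ω (G i) (t:ℝ) hGi
      have hFn2 := hFnmono ω (t:ℝ) (G (i+1)) hti
      have hF1' := hFmono hGi
      have hF2' := hFmono hti
      rw [abs_lt] at hd1 hd2
      rw [abs_le]
      constructor <;> linarith [hd1.1, hd1.2, hd2.1, hd2.2]
    linarith
  -- measure chain
  have hmeasS : (μ {ω | ε ≤ ⨆ t : Set.Icc (0:ℝ) 1,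
      |(n : ℝ)⁻¹ * (∑ k ∈ Finset.range n,
        (if ξ k ω ≤ (t : ℝ) then (1:ℝ) else 0)) - F t|}).toReal
      ≤ ((m:ℝ)+2) * (2 * Real.exp (-(n:ℝ) * (ε/4)^2 / 4)) := by
    calc (μ {ω | ε ≤ ⨆ t : Set.Icc (0:ℝ) 1,
        |(n : ℝ)⁻¹ * (∑ k ∈ Finset.range n,
          (if ξ k ω ≤ (t : ℝ) then (1:ℝ) else 0)) - F t|}).toReal
        ≤ (μ (⋃ i ∈ Finset.range (m+2), D i)).toReal :=
          ENNReal.toReal_mono (measure_ne_top μ _) (measure_mono hsub)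
    _ ≤ (∑ i ∈ Finset.range (m+2), μ (D i)).toReal := by
          apply ENNReal.toReal_mono
          · exact (ENNReal.sum_lt_top.2 (fun i _ => measure_lt_top μ _)).ne
          · exact measure_biUnion_finset_le _ _
    _ = ∑ i ∈ Finset.range (m+2), (μ (D i)).toReal :=
          ENNReal.toReal_sum (fun i _ => measure_ne_top μ _)
    _ ≤ ∑ i ∈ Finset.range (m+2), 2 * Real.exp (-(n:ℝ) * (ε/4)^2 / 4) :=
          Finset.sum_le_sum (fun i _ => hDb i)
    _ = ((m:ℝ)+2) * (2 * Real.exp (-(n:ℝ) * (ε/4)^2 / 4)) := by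
          rw [Finset.sum_const, Finset.card_range]
          push_cast
          ring
  have hlog2pos : (0:ℝ) < Real.log 2 := Real.log_pos (by norm_num)
  rcases le_or_gt ((n:ℝ) * EE) (Real.log 2) with hcase | hcase
  · -- trivial bound by 1
    have h1 : (μ {ω | ε ≤ ⨆ t : Set.Icc (0:ℝ) 1,
        |(n : ℝ)⁻¹ * (∑ k ∈ Finset.range n,
          (if ξ k ω ≤ (t : ℝ) then (1:ℝ) else 0)) - F t|}).toReal ≤ 1 := by
      rw [← ENNReal.toReal_one, ← measure_univ (μ := μ)]
      exact ENNReal.toReal_mono (measure_ne_top μ _) (measure_mono (Set.subset_univ _))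
    have h3 : Real.exp (-(Real.log 2)) ≤ Real.exp (-(n:ℝ) * EE) := by
      apply Real.exp_le_exp.2
      linarith
    rw [Real.exp_neg, Real.exp_log (by norm_num : (0:ℝ) < 2)] at h3
    linarith
  · -- log comparison
    have hEpos : 0 < EE := by
      by_contra h
      push_neg at h
      have h2 : (0:ℝ) ≤ (n:ℝ) * (-EE) := mul_nonneg hnpos.le (by linarith)
      nlinarith
    have hL : Real.log (1 + ε^2/32) ≤ ε^2/32 := by
      have := Real.log_le_sub_one_of_pos (show (0:ℝ) < 1 + ε^2/32 by positivity)
      linarith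
    have hEle : EE ≤ ε^3/256 := by
      have h1 : (ε/8) * (Real.log (1+ε^2/32) - 1) ≤ (ε/8) * (ε^2/32 - 1) :=
        mul_le_mul_of_nonneg_left (by linarith) (by positivity)
      have h2 : (4/ε) * Real.log (1+ε^2/32) ≤ (4/ε) * (ε^2/32) :=
        mul_le_mul_of_nonneg_left hL (by positivity)
      have h3 : (ε/8) * (ε^2/32 - 1) + (4/ε) * (ε^2/32) = ε^3/256 := by
        field_simp
        ring
      rw [hEE]
      linarith
    have hEquarter : 3*ε^2/256 ≤ ε^2/64 - EE := by
      have hcube : ε^3 ≤ ε^2 := by nlinarith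
      linarith
    have hlog5 : Real.log ((m:ℝ)+2) * ε ≤ 3 * Real.log 2 := by
      have hm5 : (m:ℝ) + 2 ≤ 5/ε := by
        have h53 : 2/ε + 3/ε = 5/ε := by ring
        have h3e : (3:ℝ) ≤ 3/ε := by
          rw [le_div_iff₀ hε]
          nlinarith
        linarith
      have hpos2 : (0:ℝ) < (m:ℝ)+2 := by positivity
      have h1 : Real.log ((m:ℝ)+2) ≤ Real.log (5/ε) := by
        gcongr
      rw [Real.log_div (by norm_num) (ne_of_gt hε)] at h1
      have hlogε : -Real.log ε ≤ 1/ε - 1 := by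
        have h2 := Real.log_le_sub_one_of_pos (show (0:ℝ) < 1/ε by positivity)
        rw [one_div, Real.log_inv] at h2
        rw [one_div]
        linarith
      have hlog5v : Real.log 5 ≤ 3 * Real.log 2 := by
        have h5 : (5:ℝ) ≤ 2^3 := by norm_num
        calc Real.log 5 ≤ Real.log (2^3) := by gcongr <;> norm_num
        _ = 3 * Real.log 2 := by rw [Real.log_pow]; push_cast; ring
      have hlog5ge1 : 1 ≤ Real.log 5 := by
        have h4 : Real.log 4 ≤ Real.log 5 := by gcongr <;> norm_num
        have h4v : Real.log 4 = 2 * Real.log 2 := by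
          rw [show (4:ℝ) = 2^2 by norm_num, Real.log_pow]
          push_cast; ring
        linarith [Real.log_two_gt_d9]
      have hA : Real.log ((m:ℝ)+2) * ε ≤ (Real.log 5 - Real.log ε) * ε :=
        mul_le_mul_of_nonneg_right h1 hε.le
      have hBen : (-Real.log ε) * ε ≤ (1/ε - 1) * ε := mul_le_mul_of_nonneg_right hlogε hε.le
      have hfe : (1/ε - 1) * ε = 1 - ε := by field_simp
      nlinarith [mul_nonneg (sub_nonneg.2 hε1) (sub_nonneg.2 hlog5ge1)]
    have hlogm2_nonneg : 0 ≤ Real.log ((m:ℝ)+2) := Real.log_nonneg (by push_cast; linarith)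
    have hnEE_nonneg : (0:ℝ) ≤ (n:ℝ) * EE := le_of_lt (lt_trans hlog2pos hcase)
    have hstep : Real.log ((m:ℝ)+2) * EE ≤ ((n:ℝ) * (ε^2/64 - EE)) * EE := by
      calc Real.log ((m:ℝ)+2) * EE ≤ Real.log ((m:ℝ)+2) * (ε^3/256) :=
            mul_le_mul_of_nonneg_left hEle hlogm2_nonneg
      _ = (Real.log ((m:ℝ)+2) * ε) * (ε^2/256) := by ring
      _ ≤ (3 * Real.log 2) * (ε^2/256) :=
            mul_le_mul_of_nonneg_right hlog5 (by positivity)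
      _ = (Real.log 2) * (3*ε^2/256) := by ring
      _ ≤ ((n:ℝ) * EE) * (3*ε^2/256) :=
            mul_le_mul_of_nonneg_right hcase.le (by positivity)
      _ ≤ ((n:ℝ) * EE) * (ε^2/64 - EE) :=
            mul_le_mul_of_nonneg_left hEquarter hnEE_nonneg
      _ = ((n:ℝ) * (ε^2/64 - EE)) * EE := by ring
    have hlogm : Real.log ((m:ℝ)+2) ≤ (n:ℝ) * (ε^2/64 - EE) :=
      le_of_mul_le_mul_right hstep hEpos
    have hm2exp : (m:ℝ)+2 ≤ Real.exp ((n:ℝ) * (ε^2/64 - EE)) := by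
      rw [← Real.exp_log (show (0:ℝ) < (m:ℝ)+2 by positivity)]
      exact Real.exp_le_exp.2 hlogm
    calc (μ {ω | ε ≤ ⨆ t : Set.Icc (0:ℝ) 1,
        |(n : ℝ)⁻¹ * (∑ k ∈ Finset.range n,
          (if ξ k ω ≤ (t : ℝ) then (1:ℝ) else 0)) - F t|}).toReal
        ≤ ((m:ℝ)+2) * (2 * Real.exp (-(n:ℝ) * (ε/4)^2 / 4)) := hmeasS
    _ ≤ Real.exp ((n:ℝ) * (ε^2/64 - EE)) * (2 * Real.exp (-(n:ℝ) * (ε/4)^2 / 4)) :=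
          mul_le_mul_of_nonneg_right hm2exp (by positivity)
    _ = 2 * (Real.exp ((n:ℝ) * (ε^2/64 - EE)) * Real.exp (-(n:ℝ) * (ε/4)^2 / 4)) := by
          ring
    _ = 2 * Real.exp ((n:ℝ) * (ε^2/64 - EE) + -(n:ℝ) * (ε/4)^2 / 4) := by
          rw [← Real.exp_add]
    _ = 2 * Real.exp (-(n:ℝ) * EE) := by
          congr 1
          ring
end

section
/- Define Xₜ^{n,α} = n^α (Fₙ(t) − F(t)) and 𝐌ⁿ_t = (1/√n)(𝐈ⁿ_t − 𝐀ⁿ_t), where 𝐈ⁿ_t = ∑_{k=1}^n 1{ξ_k ≤ t} and 𝐀ⁿ_t = n∫₀^t (1−Fₙ(s))/(1−F(s)) dF(s). Then for t with F(t) < 1: Xₜ^{n,α} = −∫₀^t X_s^{n,α}/(1 − F(s)) dF(s) + n^{α−1/2}·𝐌ⁿ_t. -/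
open MeasureTheory ProbabilityTheory Filter

/-- semimartingale decomposition of the centered empirical distribution:
for `t` with `F t < 1`,
`Xₜ^{n,α} = -∫₀^t X_s^{n,α}/(1-F s) dF(s) + n^{α-1/2}·𝐌ⁿ_t`, where
`𝐌ⁿ_t = n^{-1/2}(𝐈ⁿ_t - 𝐀ⁿ_t)`. -/
theorem stmt10 {Ω : Type*} {mΩ : MeasurableSpace Ω} (μ : Measure Ω) [IsProbabilityMeasure μ]
    (n : ℕ) (hn : 1 ≤ n)
    (ξ : ℕ → Ω → ℝ) (hmeas : ∀ k, Measurable (ξ k))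
    (hindep : iIndepFun ξ μ)
    (hident : ∀ k, Measure.map (ξ k) μ = Measure.map (ξ 0) μ)
    (hval : ∀ k ω, ξ k ω ∈ Set.Icc (0:ℝ) 1)
    (F : StieltjesFunction ℝ) (hFcont : Continuous F) (hFneg : ∀ s ≤ (0:ℝ), F s = 0)
    (hFdef : ∀ t, F t = (μ {ω | ξ 0 ω ≤ t}).toReal)
    (α : ℝ) (hα : α ∈ Set.Icc (0:ℝ) (1/2))
    (Fn : Ω → ℝ → ℝ)
    (hFn : ∀ ω s, Fn ω s
        = (n : ℝ)⁻¹ * ∑ k ∈ Finset.range n, (if ξ k ω ≤ s then (1:ℝ) else 0))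
    (t : ℝ) (ht : 0 ≤ t) (hFt : F t < 1) :
    ∀ ω, (n : ℝ) ^ α * (Fn ω t - F t)
      = -(∫ s in Set.Ioc 0 t, (n : ℝ) ^ α * (Fn ω s - F s) / (1 - F s) ∂F.measure)
        + (n : ℝ) ^ (α - 1/2) * ((Real.sqrt n)⁻¹ *
            ((∑ k ∈ Finset.range n, (if ξ k ω ≤ t then (1:ℝ) else 0))
              - (n : ℝ) * ∫ s in Set.Ioc 0 t, (1 - Fn ω s) / (1 - F s) ∂F.measure)) := by
  intro ω
  have hnpos : (0:ℝ) < n := by exact_mod_cast hn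
  have hF0 : F 0 = 0 := hFneg 0 le_rfl
  have hF01 : ∀ s, F s ∈ Set.Icc (0:ℝ) 1 := by
    intro s
    rw [hFdef]
    constructor
    · exact ENNReal.toReal_nonneg
    · exact (ENNReal.toReal_le_toReal (measure_ne_top μ _) (measure_ne_top μ _)).2
        (measure_mono (Set.subset_univ _)) |>.trans (by simp)
  have hFn01 : ∀ s, Fn ω s ∈ Set.Icc (0:ℝ) 1 := by
    intro s
    rw [hFn]
    constructor
    · positivity
    · rw [inv_mul_le_iff₀ hnpos, mul_one]
      calc (∑ k ∈ Finset.range n, (if ξ k ω ≤ s then (1:ℝ) else 0))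
          ≤ ∑ k ∈ Finset.range n, (1:ℝ) := by
            apply Finset.sum_le_sum; intro k _; split <;> norm_num
        _ = n := by simp
  have hmonoFn : Monotone (Fn ω) := by
    intro a b hab
    rw [hFn, hFn]
    apply mul_le_mul_of_nonneg_left _ (by positivity)
    apply Finset.sum_le_sum
    intro k _
    by_cases h : ξ k ω ≤ a
    · simp [h, h.trans hab]
    · simp [h]; split <;> norm_num
  have hmeasFn : Measurable (Fn ω) := hmonoFn.measurable
  have hmeasF : Measurable (F : ℝ → ℝ) := F.mono.measurable
  have hFs : ∀ s ∈ Set.Ioc (0:ℝ) t, 1 - F t ≤ 1 - F s := by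
    intro s hs
    have := F.mono hs.2
    linarith
  have hc : (0:ℝ) < 1 - F t := by linarith
  haveI : IsFiniteMeasure (F.measure.restrict (Set.Ioc 0 t)) := by
    constructor
    rw [Measure.restrict_apply_univ, StieltjesFunction.measure_Ioc]
    exact ENNReal.ofReal_lt_top
  have hbound : ∀ (g : ℝ → ℝ), (∀ s, |g s| ≤ 1) → Measurable g →
      Integrable (fun s => g s / (1 - F s)) (F.measure.restrict (Set.Ioc 0 t)) := by
    intro g hg hgm
    refine ⟨(hgm.div (measurable_const.sub hmeasF)).aestronglyMeasurable, ?_⟩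
    apply HasFiniteIntegral.of_bounded (C := (1 - F t)⁻¹)
    filter_upwards [self_mem_ae_restrict (measurableSet_Ioc : MeasurableSet (Set.Ioc (0:ℝ) t))]
      with s hs
    have h1 : (0:ℝ) < 1 - F s := lt_of_lt_of_le hc (hFs s hs)
    rw [Real.norm_eq_abs, abs_div, abs_of_pos h1, div_le_iff₀ h1]
    calc |g s| ≤ 1 := hg s
      _ = (1 - F t)⁻¹ * (1 - F t) := by field_simp
      _ ≤ (1 - F t)⁻¹ * (1 - F s) := by
          apply mul_le_mul_of_nonneg_left (hFs s hs) (by positivity)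
  have hint1 : Integrable (fun s => (Fn ω s - F s) / (1 - F s))
      (F.measure.restrict (Set.Ioc 0 t)) := by
    apply hbound _ _ (hmeasFn.sub hmeasF)
    intro s
    have h1 := hFn01 s; have h2 := hF01 s
    show |Fn ω s - F s| ≤ 1
    rw [abs_le]
    constructor <;> [linarith [h1.1, h2.2]; linarith [h1.2, h2.1]]
  have hint2 : Integrable (fun s => (1 - Fn ω s) / (1 - F s))
      (F.measure.restrict (Set.Ioc 0 t)) := by
    apply hbound _ _ (measurable_const.sub hmeasFn)
    intro s
    have h1 := hFn01 s
    show |1 - Fn ω s| ≤ 1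
    rw [abs_le]
    constructor <;> [linarith [h1.2]; linarith [h1.1]]
  have hsum : (∫ s in Set.Ioc 0 t, (Fn ω s - F s) / (1 - F s) ∂F.measure)
      + (∫ s in Set.Ioc 0 t, (1 - Fn ω s) / (1 - F s) ∂F.measure) = F t := by
    rw [← integral_add hint1 hint2]
    have heq : Set.EqOn (fun s => (Fn ω s - F s) / (1 - F s) + (1 - Fn ω s) / (1 - F s))
        (fun _ => (1:ℝ)) (Set.Ioc 0 t) := by
      intro s hs
      have h1 : (0:ℝ) < 1 - F s := lt_of_lt_of_le hc (hFs s hs)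
      field_simp
      ring
    rw [setIntegral_congr_fun measurableSet_Ioc heq, setIntegral_const, measureReal_def,
      StieltjesFunction.measure_Ioc, ENNReal.toReal_ofReal (by linarith [(hF01 t).1]), hF0,
      smul_eq_mul]
    ring
  -- rewrite the sum as n * Fn ω t
  have hS : (∑ k ∈ Finset.range n, (if ξ k ω ≤ t then (1:ℝ) else 0)) = n * Fn ω t := by
    rw [hFn]
    field_simp
  -- power arithmetic
  have hpow : (n:ℝ) ^ (α - 1/2) * (Real.sqrt n)⁻¹ * n = (n:ℝ) ^ α := by
    have h1 : (Real.sqrt n)⁻¹ = (n:ℝ) ^ (-(1/2):ℝ) := by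
      rw [Real.sqrt_eq_rpow, ← Real.rpow_neg hnpos.le]
    rw [h1, ← Real.rpow_add hnpos, ← Real.rpow_add_one (ne_of_gt hnpos)]
    ring_nf
  -- pull the constant out of the first integral
  have hpull : (∫ s in Set.Ioc 0 t, (n : ℝ) ^ α * (Fn ω s - F s) / (1 - F s) ∂F.measure)
      = (n:ℝ) ^ α * ∫ s in Set.Ioc 0 t, (Fn ω s - F s) / (1 - F s) ∂F.measure := by
    rw [← integral_const_mul]
    congr 1
    ext s
    ring
  rw [hpull, hS]
  set A := ∫ s in Set.Ioc 0 t, (Fn ω s - F s) / (1 - F s) ∂F.measure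
  set B := ∫ s in Set.Ioc 0 t, (1 - Fn ω s) / (1 - F s) ∂F.measure
  have key : (n : ℝ) ^ (α - 1/2) * ((Real.sqrt n)⁻¹ * ((n:ℝ) * Fn ω t - (n:ℝ) * B))
      = (n:ℝ) ^ α * (Fn ω t - B) := by
    have : (n : ℝ) ^ (α - 1/2) * ((Real.sqrt n)⁻¹ * ((n:ℝ) * Fn ω t - (n:ℝ) * B))
        = ((n : ℝ) ^ (α - 1/2) * (Real.sqrt n)⁻¹ * n) * (Fn ω t - B) := by ring
    rw [this, hpow]
  rw [key]
  have : F t = A + B := hsum.symm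
  rw [this]
  ring
end

section
/- Let F be a continuous distribution function and m a right-continuous function of bounded variation with m₀ = 0. If x satisfies the integral equation x_t = −∫₀^t x_s/(1 − F(s)) dF(s) + m_t on [0,T] with F(T) < 1, then x_t = (1 − F(t))·∫₀^t dm_s/(1 − F(s)); in particular the solution is unique. -/
open MeasureTheory Set

lemma stmt11_finite (F : StieltjesFunction ℝ) (a b : ℝ) :
    IsFiniteMeasure (F.measure.restrict (Set.Ioc a b)) := by
  constructor
  rw [Measure.restrict_apply_univ, F.measure_Ioc]
  exact ENNReal.ofReal_lt_top

lemma stmt11_bdd_int (μ : Measure ℝ) {s : Set ℝ} (hs : MeasurableSet s) (hμ : μ s ≠ ⊤)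
    {f : ℝ → ℝ} (hf : Measurable f) {C : ℝ} (hC : ∀ x ∈ s, |f x| ≤ C) :
    IntegrableOn f s μ := by
  refine Measure.integrableOn_of_bounded (M := C) hμ hf.aestronglyMeasurable ?_
  filter_upwards [ae_restrict_mem hs] with x hx
  simpa [Real.norm_eq_abs] using hC x hx

lemma stmt11_leftLim (F : StieltjesFunction ℝ) (hFcont : Continuous F) (a : ℝ) :
    Function.leftLim F a = F a :=
  (F.mono.continuousWithinAt_Iio_iff_leftLim_eq).1 (hFcont.continuousAt.continuousWithinAt)

lemma stmt11_swap (F : StieltjesFunction ℝ) (hFcont : Continuous F)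
    (μ : StieltjesFunction ℝ) (t : ℝ) (K : ℝ)
    (hbd : ∀ u ∈ Set.Ioc (0:ℝ) t, |(1 - F u)⁻¹| ≤ K) :
    (∫ s in Set.Ioc 0 t, (∫ u in Set.Ioc 0 s, (1 - F u)⁻¹ ∂μ.measure) ∂F.measure)
      = ∫ u in Set.Ioc 0 t, (F t - F u) * (1 - F u)⁻¹ ∂μ.measure := by
  haveI := stmt11_finite F 0 t
  haveI := stmt11_finite μ 0 t
  set ρ := F.measure.restrict (Set.Ioc 0 t) with hρ
  set ν := μ.measure.restrict (Set.Ioc 0 t) with hν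
  set g : ℝ → ℝ → ℝ := fun s u => if u ≤ s then (1 - F u)⁻¹ else 0 with hg
  have hgmeas : Measurable (Function.uncurry g) := by
    exact Measurable.ite (measurableSet_le measurable_snd measurable_fst)
      ((measurable_const.sub (hFcont.measurable.comp measurable_snd)).inv) measurable_const
  have hgint : Integrable (Function.uncurry g) (ρ.prod ν) := by
    refine (integrable_const (max K 0)).mono' hgmeas.aestronglyMeasurable ?_
    rw [hρ, hν, Measure.prod_restrict]
    filter_upwards [ae_restrict_mem (measurableSet_Ioc.prod measurableSet_Ioc)] with p hp
    rcases le_or_gt p.2 p.1 with h | h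
    · simp only [Function.uncurry, hg, if_pos h, Real.norm_eq_abs]
      exact le_trans (hbd p.2 hp.2) (le_max_left _ _)
    · simp only [Function.uncurry, hg, if_neg (not_le.2 h), Real.norm_eq_abs, abs_zero]
      exact le_max_right _ _
  have hswap := integral_integral_swap hgint
  have hL : (∫ s, (∫ u, g s u ∂ν) ∂ρ)
      = ∫ s in Set.Ioc 0 t, (∫ u in Set.Ioc 0 s, (1 - F u)⁻¹ ∂μ.measure) ∂F.measure := by
    rw [hρ, hν]
    refine setIntegral_congr_fun measurableSet_Ioc (fun s hs => ?_)
    have : ∀ u, g s u = (Set.Iic s).indicator (fun u => (1 - F u)⁻¹) u := by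
      intro u; simp [hg, Set.indicator_apply, Set.mem_Iic]
    simp_rw [this]
    rw [setIntegral_indicator measurableSet_Iic, Set.Ioc_inter_Iic, min_eq_right hs.2]
  have hR : (∫ u, (∫ s, g s u ∂ρ) ∂ν)
      = ∫ u in Set.Ioc 0 t, (F t - F u) * (1 - F u)⁻¹ ∂μ.measure := by
    rw [hρ, hν]
    refine setIntegral_congr_fun measurableSet_Ioc (fun u hu => ?_)
    have h1 : ∀ s, g s u = (Set.Ici u).indicator (fun _ => (1 - F u)⁻¹) s := by
      intro s; simp [hg, Set.indicator_apply, Set.mem_Ici]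
    simp_rw [h1]
    rw [setIntegral_indicator measurableSet_Ici]
    have h2 : Set.Ioc 0 t ∩ Set.Ici u = Set.Icc u t := by
      ext s
      simp only [Set.mem_inter_iff, Set.mem_Ioc, Set.mem_Ici, Set.mem_Icc]
      constructor
      · rintro ⟨⟨_, h2⟩, h3⟩; exact ⟨h3, h2⟩
      · rintro ⟨h1', h2⟩; exact ⟨⟨lt_of_lt_of_le hu.1 h1', h2⟩, h1'⟩
    rw [h2, setIntegral_const, measureReal_def, F.measure_Icc, stmt11_leftLim F hFcont,
      ENNReal.toReal_ofReal (sub_nonneg.2 (F.mono hu.2)), smul_eq_mul]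
  rw [← hL, hswap, hR]

lemma stmt11_int_h (F : StieltjesFunction ℝ) (hFcont : Continuous F)
    (μ : StieltjesFunction ℝ) (t : ℝ) (K : ℝ)
    (hbd : ∀ u ∈ Set.Ioc (0:ℝ) t, |(1 - F u)⁻¹| ≤ K) :
    IntegrableOn (fun s => ∫ u in Set.Ioc 0 s, (1 - F u)⁻¹ ∂μ.measure)
      (Set.Ioc 0 t) F.measure := by
  haveI := stmt11_finite F 0 t
  haveI := stmt11_finite μ 0 t
  set ρ := F.measure.restrict (Set.Ioc 0 t) with hρ
  set ν := μ.measure.restrict (Set.Ioc 0 t) with hν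
  set g : ℝ → ℝ → ℝ := fun s u => if u ≤ s then (1 - F u)⁻¹ else 0 with hg
  have hgmeas : Measurable (Function.uncurry g) := by
    exact Measurable.ite (measurableSet_le measurable_snd measurable_fst)
      ((measurable_const.sub (hFcont.measurable.comp measurable_snd)).inv) measurable_const
  have hgint : Integrable (Function.uncurry g) (ρ.prod ν) := by
    refine (integrable_const (max K 0)).mono' hgmeas.aestronglyMeasurable ?_
    rw [hρ, hν, Measure.prod_restrict]
    filter_upwards [ae_restrict_mem (measurableSet_Ioc.prod measurableSet_Ioc)] with p hp
    rcases le_or_gt p.2 p.1 with h | h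
    · simp only [Function.uncurry, hg, if_pos h, Real.norm_eq_abs]
      exact le_trans (hbd p.2 hp.2) (le_max_left _ _)
    · simp only [Function.uncurry, hg, if_neg (not_le.2 h), Real.norm_eq_abs, abs_zero]
      exact le_max_right _ _
  have H := hgint.integral_prod_left
  refine H.congr ?_
  filter_upwards [ae_restrict_mem measurableSet_Ioc] with s hs
  have : ∀ u, g s u = (Set.Iic s).indicator (fun u => (1 - F u)⁻¹) u := by
    intro u; simp [hg, Set.indicator_apply, Set.mem_Iic]
  show (∫ u, Function.uncurry g (s, u) ∂ν) = _
  simp only [Function.uncurry]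
  rw [hν]
  simp_rw [this]
  rw [setIntegral_indicator measurableSet_Iic, Set.Ioc_inter_Iic, min_eq_right hs.2]

/-- uniqueness/representation of the solution of the integral equation
`x_t = -∫₀^t x_s/(1-F s) dF(s) + m_t` on `[0,T]` with `F T < 1`:
`x_t = (1 - F t) ∫₀^t dm_s/(1 - F s)`, where the right-continuous bounded-variation
function `m` is written as a difference `m = m₁ - m₂` of Stieltjes functions. -/
theorem stmt11 (F : StieltjesFunction ℝ) (hFcont : Continuous F) (hF0 : F 0 = 0)
    (T : ℝ) (hT : 0 < T) (hFT : F T < 1)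
    (m₁ m₂ : StieltjesFunction ℝ) (m : ℝ → ℝ)
    (hm : ∀ t, m t = m₁ t - m₂ t) (hm0 : m 0 = 0)
    (x : ℝ → ℝ) (hxmeas : Measurable x)
    (hxint : IntegrableOn (fun s => x s / (1 - F s)) (Set.Ioc 0 T) F.measure)
    (hx : ∀ t ∈ Set.Icc (0:ℝ) T,
      x t = -(∫ s in Set.Ioc 0 t, x s / (1 - F s) ∂F.measure) + m t) :
    ∀ t ∈ Set.Icc (0:ℝ) T,
      x t = (1 - F t) * ((∫ s in Set.Ioc 0 t, (1 - F s)⁻¹ ∂m₁.measure)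
          - ∫ s in Set.Ioc 0 t, (1 - F s)⁻¹ ∂m₂.measure) := by
  have hF0le : ∀ s : ℝ, 0 ≤ s → 0 ≤ F s := fun s hs => hF0 ▸ F.mono hs
  have hpos : ∀ s ∈ Set.Icc (0:ℝ) T, (0:ℝ) < 1 - F s := fun s hs => by
    have := F.mono hs.2; linarith
  have hTpos : (0:ℝ) < 1 - F T := by linarith
  set K : ℝ := (1 - F T)⁻¹ with hKdef
  have hKpos : 0 < K := inv_pos.2 hTpos
  have hbd : ∀ t : ℝ, t ≤ T → ∀ u ∈ Set.Ioc (0:ℝ) t, |(1 - F u)⁻¹| ≤ K := by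
    intro t ht u hu
    have huT : u ∈ Set.Icc (0:ℝ) T := ⟨le_of_lt hu.1, le_trans hu.2 ht⟩
    have h1 : (0:ℝ) < 1 - F u := hpos u huT
    rw [abs_of_nonneg (le_of_lt (inv_pos.2 h1))]
    refine inv_anti₀ hTpos ?_
    have := F.mono huT.2; linarith
  -- the candidate solution
  set c : ℝ → ℝ := fun u => (1 - F u)⁻¹ with hcdef
  have hcmeas : Measurable c := (measurable_const.sub hFcont.measurable).inv
  set h₁ : ℝ → ℝ := fun r => ∫ u in Set.Ioc 0 r, c u ∂m₁.measure with hh₁def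
  set h₂ : ℝ → ℝ := fun r => ∫ u in Set.Ioc 0 r, c u ∂m₂.measure with hh₂def
  set w : ℝ → ℝ := fun r => (1 - F r) * (h₁ r - h₂ r) with hwdef
  -- integrability of h₁, h₂ and of w/(1-F) on (0,T]
  have hinth₁ : IntegrableOn h₁ (Set.Ioc 0 T) F.measure :=
    stmt11_int_h F hFcont m₁ T K (hbd T le_rfl)
  have hinth₂ : IntegrableOn h₂ (Set.Ioc 0 T) F.measure :=
    stmt11_int_h F hFcont m₂ T K (hbd T le_rfl)
  have hwdiv : ∀ s ∈ Set.Icc (0:ℝ) T, w s / (1 - F s) = h₁ s - h₂ s := by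
    intro s hs
    show ((1 - F s) * (h₁ s - h₂ s)) / (1 - F s) = h₁ s - h₂ s
    exact mul_div_cancel_left₀ _ (ne_of_gt (hpos s hs))
  have hwint : IntegrableOn (fun s => w s / (1 - F s)) (Set.Ioc 0 T) F.measure := by
    refine (hinth₁.sub hinth₂).congr ?_
    filter_upwards [ae_restrict_mem measurableSet_Ioc] with s hs
    exact (hwdiv s ⟨le_of_lt hs.1, hs.2⟩).symm
  -- the candidate satisfies the integral equation
  have hw : ∀ t ∈ Set.Icc (0:ℝ) T,
      w t = -(∫ s in Set.Ioc 0 t, w s / (1 - F s) ∂F.measure) + m t := by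
    intro t ht
    haveI := stmt11_finite F 0 t
    have hsub : Set.Ioc (0:ℝ) t ⊆ Set.Ioc 0 T := Set.Ioc_subset_Ioc_right ht.2
    have hbt := hbd t ht.2
    have e1 : (∫ s in Set.Ioc 0 t, w s / (1 - F s) ∂F.measure)
        = (∫ s in Set.Ioc 0 t, h₁ s ∂F.measure) - ∫ s in Set.Ioc 0 t, h₂ s ∂F.measure := by
      rw [← integral_sub (hinth₁.mono_set hsub) (hinth₂.mono_set hsub)]
      refine setIntegral_congr_fun measurableSet_Ioc (fun s hs => ?_)
      exact hwdiv s ⟨le_of_lt hs.1, le_trans hs.2 ht.2⟩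
    have e2 : (∫ s in Set.Ioc 0 t, h₁ s ∂F.measure)
        = ∫ u in Set.Ioc 0 t, (F t - F u) * c u ∂m₁.measure :=
      stmt11_swap F hFcont m₁ t K hbt
    have e3 : (∫ s in Set.Ioc 0 t, h₂ s ∂F.measure)
        = ∫ u in Set.Ioc 0 t, (F t - F u) * c u ∂m₂.measure :=
      stmt11_swap F hFcont m₂ t K hbt
    have hmint : ∀ μ : StieltjesFunction ℝ,
        IntegrableOn (fun u => (F t - F u) * c u) (Set.Ioc 0 t) μ.measure := by
      intro μ
      refine stmt11_bdd_int μ.measure measurableSet_Ioc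
        (by rw [μ.measure_Ioc]; exact ENNReal.ofReal_ne_top)
        ((measurable_const.sub hFcont.measurable).mul hcmeas) (C := 1 * K) ?_
      intro u hu
      rw [abs_mul]
      refine mul_le_mul ?_ (hbt u hu) (abs_nonneg _) zero_le_one
      rw [abs_of_nonneg (sub_nonneg.2 (F.mono hu.2))]
      have h0u : 0 ≤ F u := hF0le u (le_of_lt hu.1)
      have := F.mono ht.2
      linarith
    have key : ∀ μ : StieltjesFunction ℝ,
        (μ t - μ 0) - (∫ u in Set.Ioc 0 t, (F t - F u) * c u ∂μ.measure)
          = (1 - F t) * ∫ u in Set.Ioc 0 t, c u ∂μ.measure := by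
      intro μ
      haveI := stmt11_finite μ 0 t
      have hμc : (μ t - μ 0) = ∫ u in Set.Ioc 0 t, (1:ℝ) ∂μ.measure := by
        rw [setIntegral_const, measureReal_def, μ.measure_Ioc, smul_eq_mul, mul_one,
          ENNReal.toReal_ofReal (sub_nonneg.2 (μ.mono ht.1))]
      rw [hμc, ← integral_sub (integrable_const 1) (hmint μ), ← integral_const_mul]
      refine setIntegral_congr_fun measurableSet_Ioc (fun u hu => ?_)
      have h1 : (0:ℝ) < 1 - F u := hpos u ⟨le_of_lt hu.1, le_trans hu.2 ht.2⟩
      show 1 - (F t - F u) * (1 - F u)⁻¹ = (1 - F t) * (1 - F u)⁻¹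
      field_simp
      ring
    have hmt : m t = (m₁ t - m₁ 0) - (m₂ t - m₂ 0) := by
      have h0 := hm 0
      have ht' := hm t
      rw [hm0] at h0
      linarith
    have k1 : (m₁ t - m₁ 0) - (∫ u in Set.Ioc 0 t, (F t - F u) * c u ∂m₁.measure)
        = (1 - F t) * h₁ t := key m₁
    have k2 : (m₂ t - m₂ 0) - (∫ u in Set.Ioc 0 t, (F t - F u) * c u ∂m₂.measure)
        = (1 - F t) * h₂ t := key m₂
    rw [e1, e2, e3, hmt]
    show (1 - F t) * (h₁ t - h₂ t) = _
    rw [mul_sub]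
    linarith
  -- the difference z satisfies the homogeneous equation
  set z : ℝ → ℝ := fun r => x r - w r with hzdef
  have hzint : IntegrableOn (fun s => z s / (1 - F s)) (Set.Ioc 0 T) F.measure := by
    refine (hxint.sub hwint).congr ?_
    filter_upwards with s
    show x s / (1 - F s) - w s / (1 - F s) = (x s - w s) / (1 - F s)
    rw [sub_div]
  have hz : ∀ t ∈ Set.Icc (0:ℝ) T,
      z t = -(∫ s in Set.Ioc 0 t, z s / (1 - F s) ∂F.measure) := by
    intro t ht
    have hsub : Set.Ioc (0:ℝ) t ⊆ Set.Ioc 0 T := Set.Ioc_subset_Ioc_right ht.2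
    have e : (∫ s in Set.Ioc 0 t, z s / (1 - F s) ∂F.measure)
        = (∫ s in Set.Ioc 0 t, x s / (1 - F s) ∂F.measure)
          - ∫ s in Set.Ioc 0 t, w s / (1 - F s) ∂F.measure := by
      rw [← integral_sub (hxint.mono_set hsub) (hwint.mono_set hsub)]
      refine setIntegral_congr_fun measurableSet_Ioc (fun s hs => ?_)
      show (x s - w s) / (1 - F s) = x s / (1 - F s) - w s / (1 - F s)
      rw [sub_div]
    rw [e]
    show x t - w t = _
    rw [hx t ht, hw t ht]
    ring
  -- a uniform bound for z
  set M : ℝ := ∫ s in Set.Ioc 0 T, |z s / (1 - F s)| ∂F.measure with hMdef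
  have hMint : IntegrableOn (fun s => |z s / (1 - F s)|) (Set.Ioc 0 T) F.measure := hzint.abs
  have hzbd : ∀ t ∈ Set.Icc (0:ℝ) T, |z t| ≤ M := by
    intro t ht
    rw [hz t ht, abs_neg]
    calc |∫ s in Set.Ioc 0 t, z s / (1 - F s) ∂F.measure|
        ≤ ∫ s in Set.Ioc 0 t, |z s / (1 - F s)| ∂F.measure := by
          simpa only [Real.norm_eq_abs] using
            norm_integral_le_integral_norm (μ := F.measure.restrict (Set.Ioc 0 t))
              (fun s => z s / (1 - F s))
      _ ≤ M := by
          rw [hMdef]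
          refine setIntegral_mono_set hMint ?_ ?_
          · filter_upwards with s using abs_nonneg _
          · exact HasSubset.Subset.eventuallyLE (Set.Ioc_subset_Ioc_right ht.2)
  -- uniform continuity of F on [0, T]
  have hδ : (0:ℝ) < (1 - F T)/2 := by linarith
  obtain ⟨η, hη, hmod⟩ := Metric.uniformContinuousOn_iff_le.1
    (isCompact_Icc.uniformContinuousOn_of_continuous hFcont.continuousOn)
    ((1 - F T)/2) hδ
  -- the key propagation step
  have step : ∀ a : ℝ, 0 ≤ a → (∀ s ∈ Set.Icc (0:ℝ) T, s ≤ a → z s = 0) →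
      ∀ t ∈ Set.Icc (0:ℝ) T, t ≤ a + η → z t = 0 := by
    intro a ha hza t ht hta
    rcases le_or_gt t a with h | h
    · exact hza t ht h
    have haT : a ∈ Set.Icc (0:ℝ) T := ⟨ha, le_trans h.le ht.2⟩
    have key : ∀ k : ℕ, ∀ r ∈ Set.Icc (0:ℝ) T, r ≤ a + η → a < r → |z r| ≤ M / 2^k := by
      intro k
      induction k with
      | zero => intro r hr _ _; simpa using hzbd r hr
      | succ k ih =>
        intro r hr hra har
        have hint1 : IntegrableOn (fun u => z u / (1 - F u)) (Set.Ioc 0 a) F.measure :=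
          hzint.mono_set (Set.Ioc_subset_Ioc_right haT.2)
        have hint2 : IntegrableOn (fun u => z u / (1 - F u)) (Set.Ioc a r) F.measure :=
          hzint.mono_set (fun u hu => ⟨lt_of_le_of_lt ha hu.1, le_trans hu.2 hr.2⟩)
        have e0 : (∫ u in Set.Ioc 0 a, z u / (1 - F u) ∂F.measure) = 0 := by
          have h0 : Set.EqOn (fun u => z u / (1 - F u)) (fun _ => (0:ℝ)) (Set.Ioc 0 a) := by
            intro u hu
            show z u / (1 - F u) = 0
            rw [hza u ⟨hu.1.le, le_trans hu.2 haT.2⟩ hu.2, zero_div]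
          rw [setIntegral_congr_fun measurableSet_Ioc h0, integral_zero]
        have esplit : (∫ u in Set.Ioc 0 r, z u / (1 - F u) ∂F.measure)
            = ∫ u in Set.Ioc a r, z u / (1 - F u) ∂F.measure := by
          rw [← Set.Ioc_union_Ioc_eq_Ioc ha har.le,
            setIntegral_union (Set.Ioc_disjoint_Ioc_of_le le_rfl) measurableSet_Ioc hint1 hint2,
            e0, zero_add]
        have hmlt : F.measure (Set.Ioc a r) < ⊤ := by
          rw [F.measure_Ioc]; exact ENNReal.ofReal_lt_top
        have hC : ∀ u ∈ Set.Ioc a r, ‖z u / (1 - F u)‖ ≤ M / 2^k * K := by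
          intro u hu
          have huT : u ∈ Set.Icc (0:ℝ) T := ⟨le_trans ha hu.1.le, le_trans hu.2 hr.2⟩
          have h1 := ih u huT (le_trans hu.2 hra) hu.1
          rw [Real.norm_eq_abs, div_eq_mul_inv, abs_mul]
          have hMk : (0:ℝ) ≤ M / 2^k := le_trans (abs_nonneg _) h1
          exact mul_le_mul h1 (hbd T le_rfl u ⟨lt_of_le_of_lt ha hu.1, huT.2⟩)
            (abs_nonneg _) hMk
        have hnorm := by
          have h := norm_setIntegral_le_of_norm_le_const hmlt hC
          rwa [measureReal_def] at h
        have hmeq : (F.measure (Set.Ioc a r)).toReal = F r - F a := by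
          rw [F.measure_Ioc, ENNReal.toReal_ofReal (sub_nonneg.2 (F.mono har.le))]
        have hFd : F r - F a ≤ (1 - F T)/2 := by
          have hd := hmod r hr a haT (by rw [Real.dist_eq, abs_of_nonneg (by linarith)]; linarith)
          rw [Real.dist_eq] at hd
          exact le_trans (le_abs_self _) hd
        have hMk : (0:ℝ) ≤ M / 2^k := le_trans (abs_nonneg _) (ih r hr hra har)
        calc |z r| = |∫ u in Set.Ioc a r, z u / (1 - F u) ∂F.measure| := by
              rw [hz r hr, abs_neg, esplit]
          _ ≤ M / 2^k * K * (F r - F a) := by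
              rw [← hmeq]
              simpa only [Real.norm_eq_abs] using hnorm
          _ ≤ M / 2^k * K * ((1 - F T)/2) := by
              refine mul_le_mul_of_nonneg_left hFd (mul_nonneg hMk hKpos.le)
          _ = M / 2^(k+1) := by
              rw [hKdef]
              rw [pow_succ]
              field_simp
    have hlim : Filter.Tendsto (fun k : ℕ => M / 2^k) Filter.atTop (nhds 0) := by
      have h2 : Filter.Tendsto (fun k : ℕ => ((1:ℝ)/2)^k) Filter.atTop (nhds 0) :=
        tendsto_pow_atTop_nhds_zero_of_lt_one (by norm_num) (by norm_num)
      have h3 := h2.const_mul M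
      rw [mul_zero] at h3
      refine h3.congr fun k => ?_
      rw [div_pow, one_pow, mul_one_div]
    have hle : |z t| ≤ 0 := ge_of_tendsto' hlim (fun k => key k t ht hta h)
    exact abs_eq_zero.mp (le_antisymm hle (abs_nonneg _))
  -- induction to cover [0, T]
  have main : ∀ n : ℕ, ∀ t ∈ Set.Icc (0:ℝ) T, t ≤ n * η → z t = 0 := by
    intro n
    induction n with
    | zero =>
      intro t ht h0
      have ht0 : t = 0 := le_antisymm (by simpa using h0) ht.1
      subst ht0
      rw [hz 0 ⟨le_refl 0, hT.le⟩]
      simp [Set.Ioc_self]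
    | succ n ih =>
      intro t ht htn
      refine step (n * η) (mul_nonneg n.cast_nonneg hη.le) ih t ht ?_
      push_cast at htn
      linarith
  intro t ht
  obtain ⟨n, hn⟩ := exists_nat_ge (T / η)
  have hTn : T ≤ n * η := by
    rw [div_le_iff₀ hη] at hn
    linarith
  have hzt : z t = 0 := main n t ht (le_trans ht.2 hTn)
  have hxw : x t = w t := by
    have h0 : x t - w t = 0 := hzt
    linarith
  rw [hxw]
end

section
/- Let F be continuous nondecreasing with F(T) < 1. For a right-continuous bounded-variation function m with m₀ = 0, the identity (1 − F(t))·∫₀^t dm_s/(1 − F(s)) = m_t − (1 − F(t))·∫₀^t m_s/(1 − F(s))² dF(s) holds for all t ∈ [0,T] (integration by parts for the Doss–Sussmann representation). -/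
open MeasureTheory

section Stmt12AuxSec
open Set NNReal ENNReal

namespace Stmt12Aux

variable {F : StieltjesFunction ℝ} {T : ℝ}

lemma pos_sub (hFT : F T < 1) {s : ℝ} (hs : s ≤ T) : 0 < 1 - F s :=
  sub_pos.2 (lt_of_le_of_lt (F.mono hs) hFT)

lemma g_mono (hFT : F T < 1) {s u : ℝ} (hsu : s ≤ u) (hu : u ≤ T) :
    (1 - F s)⁻¹ ≤ (1 - F u)⁻¹ :=
  inv_anti₀ (pos_sub hFT hu) (sub_le_sub_left (F.mono hsu) 1)

lemma gsq_mono (hFT : F T < 1) {s u : ℝ} (hsu : s ≤ u) (hu : u ≤ T) :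
    ((1 - F s)⁻¹) ^ 2 ≤ ((1 - F u)⁻¹) ^ 2 :=
  pow_le_pow_left₀ (le_of_lt (inv_pos.2 (pos_sub hFT (hsu.trans hu)))) (g_mono hFT hsu hu) 2

lemma intOn_gsq (hFcont : Continuous F) (hFT : F T < 1) {a b : ℝ} (hb : b ≤ T) :
    IntegrableOn (fun s => ((1 - F s)⁻¹) ^ 2) (Ioc a b) F.measure := by
  rcases le_or_gt a b with hab | hab
  · apply ((ContinuousOn.integrableOn_compact isCompact_Icc ?_)).mono_set Ioc_subset_Icc_self
    exact ((continuous_const.sub hFcont).continuousOn.inv₀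
      (fun s hs => ne_of_gt (pos_sub hFT (hs.2.trans hb)))).pow 2
  · rw [Ioc_eq_empty (not_lt.2 hab.le)]
    exact integrableOn_empty

lemma step_bound (hFcont : Continuous F) (hFT : F T < 1) {a b : ℝ} (hab : a ≤ b) (hb : b ≤ T) :
    |(∫ u in Ioc a b, ((1 - F u)⁻¹) ^ 2 ∂F.measure) - ((1 - F b)⁻¹ - (1 - F a)⁻¹)|
      ≤ (F b - F a) * (((1 - F b)⁻¹) ^ 2 - ((1 - F a)⁻¹) ^ 2) := by
  have ha : a ≤ T := hab.trans hb
  have hpa := pos_sub hFT ha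
  have hpb := pos_sub hFT hb
  have hga : 0 < (1 - F a)⁻¹ := inv_pos.2 hpa
  have hgb : 0 < (1 - F b)⁻¹ := inv_pos.2 hpb
  have hgab := g_mono hFT hab hb
  have hFab : 0 ≤ F b - F a := sub_nonneg.2 (F.mono hab)
  have hmeas : (F.measure (Ioc a b)).toReal = F b - F a := by
    rw [F.measure_Ioc, ENNReal.toReal_ofReal hFab]
  have hIub : (∫ u in Ioc a b, ((1 - F u)⁻¹) ^ 2 ∂F.measure)
      ≤ (F b - F a) * ((1 - F b)⁻¹) ^ 2 := by
    have := setIntegral_mono_on (s := Ioc a b) (intOn_gsq hFcont hFT hb)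
      (integrableOn_const (by rw [F.measure_Ioc]; exact ENNReal.ofReal_ne_top))
      measurableSet_Ioc (fun x hx => gsq_mono hFT hx.2 hb)
    rwa [setIntegral_const, measureReal_def, hmeas, smul_eq_mul] at this
  have hIlb : (F b - F a) * ((1 - F a)⁻¹) ^ 2
      ≤ ∫ u in Ioc a b, ((1 - F u)⁻¹) ^ 2 ∂F.measure := by
    have := setIntegral_mono_on (s := Ioc a b)
      (integrableOn_const (by rw [F.measure_Ioc]; exact ENNReal.ofReal_ne_top))
      (intOn_gsq hFcont hFT hb)
      measurableSet_Ioc (fun x hx => gsq_mono hFT hx.1.le (hx.2.trans hb))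
    rwa [setIntegral_const, measureReal_def, hmeas, smul_eq_mul] at this
  have hdg : (1 - F b)⁻¹ - (1 - F a)⁻¹ = (F b - F a) * ((1 - F a)⁻¹ * (1 - F b)⁻¹) := by
    rw [inv_sub_inv hpb.ne' hpa.ne', div_eq_mul_inv, mul_inv]
    ring
  have h1 : (F b - F a) * ((1 - F a)⁻¹) ^ 2 ≤ (1 - F b)⁻¹ - (1 - F a)⁻¹ := by
    rw [hdg]
    apply mul_le_mul_of_nonneg_left _ hFab
    nlinarith
  have h2 : (1 - F b)⁻¹ - (1 - F a)⁻¹ ≤ (F b - F a) * ((1 - F b)⁻¹) ^ 2 := by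
    rw [hdg]
    apply mul_le_mul_of_nonneg_left _ hFab
    nlinarith
  rw [abs_le]
  constructor <;> nlinarith

lemma partition_sum (hFcont : Continuous F) (hFT : F T < 1) (p : ℕ → ℝ) (hp : Monotone p)
    (n : ℕ) (hpT : p n ≤ T) :
    ∫ u in Ioc (p 0) (p n), ((1 - F u)⁻¹) ^ 2 ∂F.measure
      = ∑ i ∈ Finset.range n, ∫ u in Ioc (p i) (p (i+1)), ((1 - F u)⁻¹) ^ 2 ∂F.measure := by
  induction n with
  | zero => simp
  | succ n ih =>
    have hpn : p n ≤ T := (hp (Nat.le_succ n)).trans hpT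
    rw [Finset.sum_range_succ, ← ih hpn,
      ← setIntegral_union (Ioc_disjoint_Ioc_of_le le_rfl) measurableSet_Ioc
        (intOn_gsq hFcont hFT hpn) (intOn_gsq hFcont hFT hpT),
      Ioc_union_Ioc_eq_Ioc (hp (Nat.zero_le n)) (hp (Nat.le_succ n))]

lemma lemC (hFcont : Continuous F) (hFT : F T < 1) {a b : ℝ} (hab : a ≤ b) (hb : b ≤ T) :
    ∫ u in Ioc a b, ((1 - F u)⁻¹) ^ 2 ∂F.measure = (1 - F b)⁻¹ - (1 - F a)⁻¹ := by
  have ha : a ≤ T := hab.trans hb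
  have hC : (0:ℝ) ≤ ((1 - F b)⁻¹) ^ 2 - ((1 - F a)⁻¹) ^ 2 :=
    sub_nonneg.2 (gsq_mono hFT hab hb)
  set C : ℝ := ((1 - F b)⁻¹) ^ 2 - ((1 - F a)⁻¹) ^ 2 with hCdef
  have key : ∀ ε > (0:ℝ),
      |(∫ u in Ioc a b, ((1 - F u)⁻¹) ^ 2 ∂F.measure) - ((1 - F b)⁻¹ - (1 - F a)⁻¹)|
        ≤ ε * C := by
    intro ε hε
    obtain ⟨δ, hδpos, hδ⟩ := Metric.uniformContinuousOn_iff.mp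
      (isCompact_Icc.uniformContinuousOn_of_continuous hFcont.continuousOn
        : UniformContinuousOn F (Icc a b)) ε hε
    obtain ⟨n, hn⟩ := exists_nat_gt ((b - a) / δ)
    have hn0 : (0:ℝ) < n := lt_of_le_of_lt (div_nonneg (sub_nonneg.2 hab) hδpos.le) hn
    set c : ℝ := (b - a) / n with hcdef
    have hc0 : 0 ≤ c := div_nonneg (sub_nonneg.2 hab) hn0.le
    have hcδ : c < δ := by
      rw [hcdef, div_lt_iff₀ hn0]
      rw [div_lt_iff₀ hδpos] at hn
      linarith [hn]
    set p : ℕ → ℝ := fun i => a + i * c with hpdef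
    have hpmono : Monotone p := fun i j hij => by
      simp only [hpdef]
      exact add_le_add_right (mul_le_mul_of_nonneg_right (Nat.cast_le.2 hij) hc0) a
    have hp0 : p 0 = a := by simp [hpdef]
    have hpn : p n = b := by
      simp only [hpdef, hcdef]
      rw [mul_div_cancel₀ _ hn0.ne']
      ring
    have hpIcc : ∀ i ≤ n, p i ∈ Icc a b := fun i hi =>
      ⟨by rw [← hp0]; exact hpmono (Nat.zero_le i), by rw [← hpn]; exact hpmono hi⟩
    have hstep : ∀ i, p (i+1) - p i = c := by
      intro i
      simp only [hpdef]
      push_cast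
      ring
    have hbd : ∀ i ∈ Finset.range n,
        |(∫ u in Ioc (p i) (p (i+1)), ((1 - F u)⁻¹) ^ 2 ∂F.measure)
            - ((1 - F (p (i+1)))⁻¹ - (1 - F (p i))⁻¹)|
          ≤ ε * (((1 - F (p (i+1)))⁻¹) ^ 2 - ((1 - F (p i))⁻¹) ^ 2) := by
      intro i hi
      rw [Finset.mem_range] at hi
      have hi1 : i + 1 ≤ n := hi
      have hmem := hpIcc i hi.le
      have hmem1 := hpIcc (i+1) hi1
      have hple : p i ≤ p (i+1) := hpmono (Nat.le_succ i)
      have hpiT : p (i+1) ≤ T := hmem1.2.trans hb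
      refine (step_bound hFcont hFT hple hpiT).trans ?_
      apply mul_le_mul_of_nonneg_right _ (sub_nonneg.2 (gsq_mono hFT hple hpiT))
      have := hδ (p (i+1)) hmem1 (p i) hmem
        (by rw [Real.dist_eq, hstep i, abs_of_nonneg hc0]; exact hcδ)
      rw [Real.dist_eq] at this
      calc F (p (i+1)) - F (p i) ≤ |F (p (i+1)) - F (p i)| := le_abs_self _
        _ ≤ ε := this.le
    calc |(∫ u in Ioc a b, ((1 - F u)⁻¹) ^ 2 ∂F.measure) - ((1 - F b)⁻¹ - (1 - F a)⁻¹)|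
        = |∑ i ∈ Finset.range n,
            ((∫ u in Ioc (p i) (p (i+1)), ((1 - F u)⁻¹) ^ 2 ∂F.measure)
              - ((1 - F (p (i+1)))⁻¹ - (1 - F (p i))⁻¹))| := by
          rw [Finset.sum_sub_distrib, Finset.sum_range_sub (fun i => (1 - F (p i))⁻¹) n,
            ← partition_sum hFcont hFT p hpmono n (by rw [hpn]; exact hb), hp0, hpn]
      _ ≤ ∑ i ∈ Finset.range n,
            |(∫ u in Ioc (p i) (p (i+1)), ((1 - F u)⁻¹) ^ 2 ∂F.measure)
              - ((1 - F (p (i+1)))⁻¹ - (1 - F (p i))⁻¹)| := Finset.abs_sum_le_sum_abs _ _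
      _ ≤ ∑ i ∈ Finset.range n,
            ε * (((1 - F (p (i+1)))⁻¹) ^ 2 - ((1 - F (p i))⁻¹) ^ 2) :=
          Finset.sum_le_sum hbd
      _ = ε * C := by
          rw [← Finset.mul_sum, Finset.sum_range_sub (fun i => ((1 - F (p i))⁻¹) ^ 2) n,
            hp0, hpn]
  have habs : |(∫ u in Ioc a b, ((1 - F u)⁻¹) ^ 2 ∂F.measure)
      - ((1 - F b)⁻¹ - (1 - F a)⁻¹)| ≤ 0 := by
    apply _root_.le_of_forall_pos_le_add
    intro ε hε
    have := key (ε / (C + 1)) (div_pos hε (by linarith))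
    have hfrac : ε / (C + 1) * C ≤ ε := by
      rw [div_mul_eq_mul_div, div_le_iff₀ (by linarith : (0:ℝ) < C + 1)]
      nlinarith
    linarith
  have := abs_nonneg ((∫ u in Ioc a b, ((1 - F u)⁻¹) ^ 2 ∂F.measure)
      - ((1 - F b)⁻¹ - (1 - F a)⁻¹))
  have h0 : |(∫ u in Ioc a b, ((1 - F u)⁻¹) ^ 2 ∂F.measure)
      - ((1 - F b)⁻¹ - (1 - F a)⁻¹)| = 0 := le_antisymm habs this
  have := abs_eq_zero.mp h0
  linarith [sub_eq_zero.mp this]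

lemma phi_meas (hFcont : Continuous F) :
    Measurable fun u : ℝ => Real.toNNReal (((1 - F u)⁻¹) ^ 2) :=
  (((measurable_const.sub hFcont.measurable).inv).pow_const 2).real_toNNReal

lemma nu_Ioc (hFcont : Continuous F) (hFT : F T < 1) {s t : ℝ} (hst : s ≤ t) (ht : t ≤ T) :
    (F.measure.withDensity fun u => ((Real.toNNReal (((1 - F u)⁻¹) ^ 2) : ℝ≥0) : ℝ≥0∞))
        (Ioc s t)
      = ENNReal.ofReal ((1 - F t)⁻¹ - (1 - F s)⁻¹) := by
  rw [withDensity_apply _ measurableSet_Ioc, ← lemC hFcont hFT hst ht,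
    ofReal_integral_eq_lintegral_ofReal (intOn_gsq hFcont hFT ht)
      (Filter.Eventually.of_forall fun u => sq_nonneg _)]
  rfl

lemma intOn_g (hFcont : Continuous F) (hFT : F T < 1) {a b : ℝ} (hb : b ≤ T)
    (μ : Measure ℝ) [IsLocallyFiniteMeasure μ] :
    IntegrableOn (fun s => (1 - F s)⁻¹) (Ioc a b) μ := by
  rcases le_or_gt a b with hab | hab
  · apply ((ContinuousOn.integrableOn_compact isCompact_Icc ?_)).mono_set Ioc_subset_Icc_self
    exact (continuous_const.sub hFcont).continuousOn.inv₀
      (fun s hs => ne_of_gt (pos_sub hFT (hs.2.trans hb)))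
  · rw [Ioc_eq_empty (not_lt.2 hab.le)]
    exact integrableOn_empty

lemma intOn_mt {t : ℝ} (ht0 : 0 ≤ t) (mt : StieltjesFunction ℝ) (μ : Measure ℝ)
    (hμ : μ (Ioc 0 t) ≠ ⊤) : IntegrableOn (fun s => mt s) (Ioc 0 t) μ := by
  apply Measure.integrableOn_of_bounded hμ
    (mt.mono.measurable.aestronglyMeasurable) (M := max |mt 0| |mt t|)
  apply (ae_restrict_iff' measurableSet_Ioc).2 (Filter.Eventually.of_forall fun s hs => ?_)
  exact abs_le_max_abs_abs (mt.mono hs.1.le) (mt.mono hs.2)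

lemma ibp (hFcont : Continuous F) (hFT : F T < 1) (mt : StieltjesFunction ℝ)
    {t : ℝ} (ht0 : 0 ≤ t) (ht : t ≤ T) :
    ∫ s in Ioc 0 t, (1 - F s)⁻¹ ∂mt.measure
      = (1 - F t)⁻¹ * mt t - (1 - F 0)⁻¹ * mt 0
        - ∫ s in Ioc 0 t, mt s * ((1 - F s)⁻¹) ^ 2 ∂F.measure := by
  classical
  set ν : Measure ℝ :=
    F.measure.withDensity fun u => ((Real.toNNReal (((1 - F u)⁻¹) ^ 2) : ℝ≥0) : ℝ≥0∞) with hν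
  have hν_Ioc : ∀ {s u : ℝ}, s ≤ u → u ≤ T →
      ν (Ioc s u) = ENNReal.ofReal ((1 - F u)⁻¹ - (1 - F s)⁻¹) :=
    fun hsu hu => nu_Ioc hFcont hFT hsu hu
  have hμfin : mt.measure (Ioc 0 t) ≠ ⊤ := by
    rw [mt.measure_Ioc]; exact ENNReal.ofReal_ne_top
  have hνfin : ν (Ioc 0 t) ≠ ⊤ := by
    rw [hν_Ioc ht0 ht]; exact ENNReal.ofReal_ne_top
  haveI : IsFiniteMeasure (mt.measure.restrict (Ioc 0 t)) :=
    ⟨by rw [Measure.restrict_apply_univ]; exact hμfin.lt_top⟩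
  haveI : IsFiniteMeasure (ν.restrict (Ioc 0 t)) :=
    ⟨by rw [Measure.restrict_apply_univ]; exact hνfin.lt_top⟩
  haveI : NullSingletonClass F.measure := by
    constructor
    intro a
    rw [F.measure_singleton]
    have : Function.leftLim (⇑F) a = F a :=
      leftLim_eq_of_tendsto
        (hFcont.continuousAt.continuousWithinAt)
    rw [this]
    simp
  haveI : NullSingletonClass ν := by
    constructor
    intro a
    rw [hν, withDensity_apply _ (measurableSet_singleton a)]
    exact setLIntegral_measure_zero _ _ (measure_singleton a)
  have hS : MeasurableSet {p : ℝ × ℝ | p.1 < p.2} :=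
    measurableSet_lt measurable_fst measurable_snd
  -- the two evaluations of the product measure
  have E1 : ((mt.measure.restrict (Ioc 0 t)).prod (ν.restrict (Ioc 0 t)))
        {p : ℝ × ℝ | p.1 < p.2}
      = ∫⁻ s in Ioc 0 t, ENNReal.ofReal ((1 - F t)⁻¹ - (1 - F s)⁻¹) ∂mt.measure := by
    rw [Measure.prod_apply hS]
    apply setLIntegral_congr_fun measurableSet_Ioc
    intro s hs
    beta_reduce
    have h1 : Prod.mk s ⁻¹' {p : ℝ × ℝ | p.1 < p.2} = Ioi s := rfl
    rw [h1, Measure.restrict_apply measurableSet_Ioi]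
    have h2 : Ioi s ∩ Ioc 0 t = Ioc s t := by
      ext u
      simp only [mem_inter_iff, mem_Ioi, mem_Ioc]
      exact ⟨fun h => ⟨h.1, h.2.2⟩, fun h => ⟨h.1, hs.1.trans h.1, h.2⟩⟩
    rw [h2, hν_Ioc hs.2 ht]
  have E2 : ((mt.measure.restrict (Ioc 0 t)).prod (ν.restrict (Ioc 0 t)))
        {p : ℝ × ℝ | p.1 < p.2}
      = ∫⁻ u in Ioc 0 t, ENNReal.ofReal (mt u - mt 0) ∂ν := by
    rw [Measure.prod_apply_symm hS]
    have hae : ∀ᵐ u ∂ν.restrict (Ioc 0 t), Function.leftLim (⇑mt) u = mt u := by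
      have hN : ν {x | Function.leftLim (⇑mt) x ≠ mt x} = 0 :=
        Set.Countable.measure_zero mt.countable_leftLim_ne ν
      have hN' : ν.restrict (Ioc 0 t) {x | Function.leftLim (⇑mt) x ≠ mt x} = 0 :=
        le_antisymm (le_trans (Measure.restrict_le_self _) hN.le) (zero_le)
      exact hN'
    have hmem : ∀ᵐ u ∂ν.restrict (Ioc 0 t), u ∈ Ioc 0 t :=
      ae_restrict_mem measurableSet_Ioc
    apply lintegral_congr_ae
    filter_upwards [hae, hmem] with u hu hu'
    have h1 : (fun x => (x, u)) ⁻¹' {p : ℝ × ℝ | p.1 < p.2} = Iio u := rfl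
    rw [h1, Measure.restrict_apply measurableSet_Iio]
    have h2 : Iio u ∩ Ioc 0 t = Ioo 0 u := by
      ext s
      simp only [mem_inter_iff, mem_Iio, mem_Ioc, mem_Ioo]
      exact ⟨fun h => ⟨h.2.1, h.1⟩, fun h => ⟨h.2, h.1, h.2.le.trans hu'.2⟩⟩
    rw [h2, mt.measure_Ioo, hu]
  -- convert to real integrals
  have hg_int : IntegrableOn (fun s => (1 - F s)⁻¹) (Ioc 0 t) mt.measure :=
    intOn_g hFcont hFT ht mt.measure
  have hA : ∫⁻ s in Ioc 0 t, ENNReal.ofReal ((1 - F t)⁻¹ - (1 - F s)⁻¹) ∂mt.measure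
      = ENNReal.ofReal (∫ s in Ioc 0 t, ((1 - F t)⁻¹ - (1 - F s)⁻¹) ∂mt.measure) :=
    (ofReal_integral_eq_lintegral_ofReal
      (by exact (integrable_const _).sub hg_int)
      ((ae_restrict_iff' measurableSet_Ioc).2 (Filter.Eventually.of_forall
        fun s hs => sub_nonneg.2 (g_mono hFT hs.2 ht)))).symm
  have hmt_int : Integrable (fun s => mt s) (ν.restrict (Ioc 0 t)) :=
    intOn_mt ht0 mt ν hνfin
  have hB : ∫⁻ u in Ioc 0 t, ENNReal.ofReal (mt u - mt 0) ∂ν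
      = ENNReal.ofReal (∫ u in Ioc 0 t, (mt u - mt 0) ∂ν) :=
    (ofReal_integral_eq_lintegral_ofReal
      (by exact hmt_int.sub (integrable_const _))
      ((ae_restrict_iff' measurableSet_Ioc).2 (Filter.Eventually.of_forall
        fun u hu => sub_nonneg.2 (mt.mono hu.1.le)))).symm
  have hreal : ∫ s in Ioc 0 t, ((1 - F t)⁻¹ - (1 - F s)⁻¹) ∂mt.measure
      = ∫ u in Ioc 0 t, (mt u - mt 0) ∂ν := by
    have := E1.symm.trans E2
    rw [hA, hB] at this
    rw [← ENNReal.ofReal_eq_ofReal_iff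
      (setIntegral_nonneg measurableSet_Ioc fun s hs => sub_nonneg.2 (g_mono hFT hs.2 ht))
      (setIntegral_nonneg measurableSet_Ioc fun u hu => sub_nonneg.2 (mt.mono hu.1.le))]
    exact this
  -- expand both sides
  have hμtoReal : (mt.measure (Ioc 0 t)).toReal = mt t - mt 0 := by
    rw [mt.measure_Ioc, ENNReal.toReal_ofReal (sub_nonneg.2 (mt.mono ht0))]
  have hνtoReal : (ν (Ioc 0 t)).toReal = (1 - F t)⁻¹ - (1 - F 0)⁻¹ := by
    rw [hν_Ioc ht0 ht, ENNReal.toReal_ofReal (sub_nonneg.2 (g_mono hFT ht0 ht))]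
  have hL : ∫ s in Ioc 0 t, ((1 - F t)⁻¹ - (1 - F s)⁻¹) ∂mt.measure
      = (1 - F t)⁻¹ * (mt t - mt 0) - ∫ s in Ioc 0 t, (1 - F s)⁻¹ ∂mt.measure := by
    rw [integral_sub (integrable_const _) hg_int, setIntegral_const, smul_eq_mul,
      measureReal_def, hμtoReal, mul_comm]
  have hR : ∫ u in Ioc 0 t, (mt u - mt 0) ∂ν
      = (∫ u in Ioc 0 t, mt u ∂ν) - mt 0 * ((1 - F t)⁻¹ - (1 - F 0)⁻¹) := by
    rw [integral_sub hmt_int (integrable_const _), setIntegral_const, measureReal_def, hνtoReal, smul_eq_mul]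
    ring
  -- identify ∫ mt dν with the density integral
  have hdens : ∫ u in Ioc 0 t, mt u ∂ν
      = ∫ u in Ioc 0 t, mt u * ((1 - F u)⁻¹) ^ 2 ∂F.measure := by
    rw [hν, restrict_withDensity measurableSet_Ioc,
      integral_withDensity_eq_integral_smul (phi_meas hFcont)]
    apply setIntegral_congr_fun measurableSet_Ioc
    intro u hu
    have hco : ((((1 - F u)⁻¹ ^ 2).toNNReal : ℝ≥0) : ℝ) = (1 - F u)⁻¹ ^ 2 :=
      Real.coe_toNNReal _ (sq_nonneg _)
    simp only [NNReal.smul_def, hco, smul_eq_mul, mul_comm]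
  rw [hL, hR, hdens] at hreal
  linarith

lemma intOn_m_gsq (hFcont : Continuous F) (hFT : F T < 1) (mt : StieltjesFunction ℝ)
    {t : ℝ} (ht0 : 0 ≤ t) (ht : t ≤ T) :
    IntegrableOn (fun s => mt s * ((1 - F s)⁻¹) ^ 2) (Ioc 0 t) F.measure := by
  apply Measure.integrableOn_of_bounded
    (by rw [F.measure_Ioc]; exact ENNReal.ofReal_ne_top)
    ((mt.mono.measurable.mul
      ((measurable_const.sub hFcont.measurable).inv.pow_const 2)).aestronglyMeasurable)
    (M := max |mt 0| |mt t| * ((1 - F t)⁻¹) ^ 2)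
  apply (ae_restrict_iff' measurableSet_Ioc).2 (Filter.Eventually.of_forall fun s hs => ?_)
  show ‖mt s * ((1 - F s)⁻¹) ^ 2‖ ≤ _
  rw [Real.norm_eq_abs, abs_mul]
  apply mul_le_mul (abs_le_max_abs_abs (mt.mono hs.1.le) (mt.mono hs.2)) ?_ (abs_nonneg _)
    (le_trans (abs_nonneg _) (le_max_left _ _))
  rw [abs_of_nonneg (sq_nonneg _)]
  exact gsq_mono hFT hs.2 ht

end Stmt12Aux


end Stmt12AuxSec

section
open Set

/-- integration-by-parts identity
`(1-F t)·∫₀^t dm_s/(1-F s) = m_t - (1-F t)·∫₀^t m_s/(1-F s)² dF(s)` for continuous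
nondecreasing `F` with `F T < 1` and a right-continuous bounded-variation `m` with
`m 0 = 0`, written as a difference `m = m₁ - m₂` of Stieltjes functions. -/
theorem stmt12 (F : StieltjesFunction ℝ) (hFcont : Continuous F)
    (T : ℝ) (hT : 0 < T) (hFT : F T < 1)
    (m₁ m₂ : StieltjesFunction ℝ) (m : ℝ → ℝ)
    (hm : ∀ t, m t = m₁ t - m₂ t) (hm0 : m 0 = 0) :
    ∀ t ∈ Set.Icc (0:ℝ) T,
      (1 - F t) * ((∫ s in Set.Ioc 0 t, (1 - F s)⁻¹ ∂m₁.measure)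
          - ∫ s in Set.Ioc 0 t, (1 - F s)⁻¹ ∂m₂.measure)
        = m t - (1 - F t) * ∫ s in Set.Ioc 0 t, m s / (1 - F s) ^ 2 ∂F.measure := by
  rintro t ⟨ht0, htT⟩
  have hFt : 0 < 1 - F t := Stmt12Aux.pos_sub hFT htT
  have h1 := Stmt12Aux.ibp hFcont hFT m₁ ht0 htT
  have h2 := Stmt12Aux.ibp hFcont hFT m₂ ht0 htT
  have hint1 := Stmt12Aux.intOn_m_gsq hFcont hFT m₁ ht0 htT
  have hint2 := Stmt12Aux.intOn_m_gsq hFcont hFT m₂ ht0 htT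
  have hsplit : ∫ s in Set.Ioc 0 t, m s / (1 - F s) ^ 2 ∂F.measure
      = (∫ s in Set.Ioc 0 t, m₁ s * ((1 - F s)⁻¹) ^ 2 ∂F.measure)
        - ∫ s in Set.Ioc 0 t, m₂ s * ((1 - F s)⁻¹) ^ 2 ∂F.measure := by
    rw [← integral_sub hint1 hint2]
    apply setIntegral_congr_fun measurableSet_Ioc
    intro s hs
    show m s / (1 - F s) ^ 2 = m₁ s * (1 - F s)⁻¹ ^ 2 - m₂ s * (1 - F s)⁻¹ ^ 2
    rw [hm s, div_eq_mul_inv, ← inv_pow]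
    ring
  rw [h1, h2, hsplit]
  have hmt := hm t
  have hX : m₁ 0 - m₂ 0 = 0 := by rw [← hm 0]; exact hm0
  have hcanc : (1 - F t) * (1 - F t)⁻¹ = 1 := mul_inv_cancel₀ hFt.ne'
  linear_combination (m₁ t - m₂ t) * hcanc - ((1 - F t) * (1 - F 0)⁻¹) * hX - hmt


end
end

section
/- Let θ ∈ (0,T], F a continuous distribution function with F(θ) < 1, and w ∈ L²(dF) on [0,θ]. If (1 − F(θ))²·(∫₀^θ w_s/(1 − F(s)) dF(s))² = ε², then ∫₀^θ w_s² dF(s) ≥ ε²/( F(θ)·(1 − F(θ)) ). Moreover this lower bound is attained when w_s = l/(1 − F(s)) for an appropriate constant l. -/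
open MeasureTheory

section Aux

/-- Cauchy–Schwarz for real integrals. -/
lemma cs_integral {μ : Measure ℝ} {f g : ℝ → ℝ}
    (hf : Integrable (fun x => f x ^ 2) μ) (hg : Integrable (fun x => g x ^ 2) μ)
    (hfm : AEStronglyMeasurable f μ) (hgm : AEStronglyMeasurable g μ) :
    (∫ x, f x * g x ∂μ) ^ 2 ≤ (∫ x, f x ^ 2 ∂μ) * (∫ x, g x ^ 2 ∂μ) := by
  have hfg : Integrable (fun x => f x * g x) μ := by
    refine Integrable.mono ((hf.add hg).div_const 2) (hfm.mul hgm) ?_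
    filter_upwards with x
    simp only [Real.norm_eq_abs, Pi.add_apply]
    rw [abs_mul, abs_div]
    have h1 : |f x * g x| ≤ (f x ^ 2 + g x ^ 2) / 2 := by
      rw [abs_mul]
      nlinarith [sq_nonneg (|f x| - |g x|), sq_abs (f x), sq_abs (g x), abs_nonneg (f x),
        abs_nonneg (g x)]
    calc |f x| * |g x| = |f x * g x| := (abs_mul _ _).symm
      _ ≤ (f x ^ 2 + g x ^ 2) / 2 := h1
      _ ≤ |f x ^ 2 + g x ^ 2| / |(2:ℝ)| := by
          rw [abs_two]
          gcongr
          exact le_abs_self _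
  set A := ∫ x, f x ^ 2 ∂μ with hA
  set B := ∫ x, g x ^ 2 ∂μ with hB
  set C := ∫ x, f x * g x ∂μ with hC
  have key : ∀ t : ℝ, 0 ≤ A * (t * t) + (2 * C) * t + B := by
    intro t
    have hexp : ∀ x, (t * f x + g x) ^ 2
        = t ^ 2 * f x ^ 2 + 2 * t * (f x * g x) + g x ^ 2 := by intro x; ring
    have hint : Integrable (fun x => (t * f x + g x) ^ 2) μ := by
      simp_rw [hexp]
      exact ((hf.const_mul _).add (hfg.const_mul _)).add hg
    have h0 : (0:ℝ) ≤ ∫ x, (t * f x + g x) ^ 2 ∂μ :=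
      integral_nonneg fun x => sq_nonneg _
    have e1 : Integrable (fun x => t ^ 2 * f x ^ 2) μ := hf.const_mul _
    have e2 : Integrable (fun x => 2 * t * (f x * g x)) μ := hfg.const_mul _
    have e12 : Integrable (fun x => t ^ 2 * f x ^ 2 + 2 * t * (f x * g x)) μ := e1.add e2
    have : ∫ x, (t * f x + g x) ^ 2 ∂μ
        = t ^ 2 * A + 2 * t * C + B := by
      simp_rw [hexp]
      rw [integral_add e12 hg, integral_add e1 e2, integral_const_mul, integral_const_mul]
    nlinarith [h0, this]
  have hd := discrim_le_zero key
  rw [discrim] at hd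
  nlinarith [hd]

/-- Pushforward of the restricted Stieltjes measure under the (continuous) cdf. -/
lemma map_stieltjes (F : StieltjesFunction ℝ) (hFcont : Continuous F) (hF0 : F 0 = 0)
    {θ : ℝ} (hθ : 0 < θ) :
    Measure.map F (F.measure.restrict (Set.Ioc 0 θ))
      = volume.restrict (Set.Ioc 0 (F θ)) := by
  have hmono : Monotone F := F.mono
  have hFθ0 : 0 ≤ F θ := hF0 ▸ hmono hθ.le
  have hFmeas : Measurable F := hFcont.measurable
  have claimA : ∀ a : ℝ, F.measure (Set.Ioc 0 θ ∩ {s | F s ≤ a})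
      = ENNReal.ofReal (min a (F θ)) := by
    intro a
    rcases lt_or_ge a 0 with ha | ha
    · have : Set.Ioc 0 θ ∩ {s | F s ≤ a} = ∅ := by
        ext s
        simp only [Set.mem_inter_iff, Set.mem_Ioc, Set.mem_setOf_eq, Set.mem_empty_iff_false,
          iff_false, not_and, and_imp]
        intro hs0 _ hFs
        have : (0:ℝ) ≤ F s := hF0 ▸ hmono hs0.le
        linarith
      rw [this]
      simp [min_eq_left (le_trans ha.le hFθ0), ENNReal.ofReal_eq_zero.mpr ha.le]
    rcases le_or_gt (F θ) a with haθ | haθ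
    · have : Set.Ioc 0 θ ∩ {s | F s ≤ a} = Set.Ioc 0 θ := by
        apply Set.inter_eq_left.mpr
        intro s hs
        exact le_trans (hmono hs.2) haθ
      rw [this, F.measure_Ioc, hF0, min_eq_right haθ, sub_zero]
    · -- 0 ≤ a < F θ
      set S := {s : ℝ | s ∈ Set.Icc 0 θ ∧ F s ≤ a} with hS
      have hSclosed : IsClosed S := by
        have : S = Set.Icc 0 θ ∩ F ⁻¹' Set.Iic a := rfl
        rw [this]
        exact isClosed_Icc.inter (isClosed_Iic.preimage hFcont)
      have hSne : S.Nonempty := ⟨0, ⟨le_refl 0, hθ.le⟩, by rw [hF0]; exact ha⟩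
      have hSbdd : BddAbove S := ⟨θ, fun s hs => hs.1.2⟩
      set c := sSup S with hc
      have hcS : c ∈ S := hSclosed.csSup_mem hSne hSbdd
      obtain ⟨⟨hc0, hcθ⟩, hca⟩ := hcS
      have hcθlt : c < θ := by
        rcases lt_or_eq_of_le hcθ with h | h
        · exact h
        · exfalso; rw [h] at hca; linarith
      have hFca : F c = a := by
        by_contra hne
        have hlt : F c < a := lt_of_le_of_ne hca hne
        have hev3 : ∀ᶠ s in nhdsWithin c (Set.Ioi c), F s < a ∧ s < θ :=
          Filter.Eventually.filter_mono nhdsWithin_le_nhds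
            ((Filter.Tendsto.eventually_lt_const hlt (hFcont.tendsto c)).and
              (eventually_lt_nhds hcθlt))
        obtain ⟨s, ⟨hFs, hsθ⟩, hsc⟩ := (hev3.and eventually_mem_nhdsWithin).exists
        have hsS : s ∈ S := ⟨⟨le_trans hc0 (le_of_lt hsc), hsθ.le⟩, hFs.le⟩
        exact absurd (le_csSup hSbdd hsS) (not_le.mpr hsc)
      have hseteq : Set.Ioc 0 θ ∩ {s | F s ≤ a} = Set.Ioc 0 c := by
        ext s
        simp only [Set.mem_inter_iff, Set.mem_Ioc, Set.mem_setOf_eq]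
        constructor
        · rintro ⟨⟨hs0, hsθ⟩, hFs⟩
          exact ⟨hs0, le_csSup hSbdd ⟨⟨hs0.le, hsθ⟩, hFs⟩⟩
        · rintro ⟨hs0, hsc⟩
          exact ⟨⟨hs0, le_trans hsc hcθ⟩, le_trans (hmono hsc) (hFca ▸ le_refl a)⟩
      rw [hseteq, F.measure_Ioc, hF0, sub_zero, hFca, min_eq_left haθ.le]
  haveI : IsFiniteMeasure (F.measure.restrict (Set.Ioc 0 θ)) := by
    constructor
    rw [Measure.restrict_apply_univ, F.measure_Ioc]
    exact ENNReal.ofReal_lt_top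
  refine Measure.ext_of_Ioc_finite _ _ ?_ (fun a b hab => ?_)
  · rw [Measure.map_apply hFmeas MeasurableSet.univ, Set.preimage_univ,
      Measure.restrict_apply_univ, F.measure_Ioc, hF0, sub_zero,
      Measure.restrict_apply_univ, Real.volume_Ioc, sub_zero]
  · rw [Measure.map_apply hFmeas measurableSet_Ioc, Measure.restrict_apply
      (hFmeas measurableSet_Ioc), Measure.restrict_apply measurableSet_Ioc]
    have hpre : F ⁻¹' Set.Ioc a b ∩ Set.Ioc 0 θ
        = (Set.Ioc 0 θ ∩ {s | F s ≤ b}) \ (Set.Ioc 0 θ ∩ {s | F s ≤ a}) := by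
      ext s
      simp only [Set.mem_inter_iff, Set.mem_preimage, Set.mem_Ioc, Set.mem_setOf_eq,
        Set.mem_diff, not_and]
      constructor
      · rintro ⟨⟨hFa, hFb⟩, hs⟩
        exact ⟨⟨hs, hFb⟩, fun _ => not_le.mpr hFa⟩
      · rintro ⟨⟨hs, hFb⟩, h2⟩
        exact ⟨⟨not_le.mp (h2 hs), hFb⟩, hs⟩
    rw [hpre]
    have hsub : (Set.Ioc 0 θ ∩ {s | F s ≤ a}) ⊆ (Set.Ioc 0 θ ∩ {s | F s ≤ b}) :=
      Set.inter_subset_inter_right _ (fun s hs => le_trans hs hab.le)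
    have hm2 : NullMeasurableSet (Set.Ioc 0 θ ∩ {s | F s ≤ a}) F.measure :=
      (measurableSet_Ioc.inter (hFmeas measurableSet_Iic)).nullMeasurableSet
    have hfin : F.measure (Set.Ioc 0 θ ∩ {s | F s ≤ a}) ≠ ⊤ := by
      rw [claimA]; exact ENNReal.ofReal_ne_top
    rw [measure_diff hsub hm2 hfin, claimA, claimA, Set.Ioc_inter_Ioc, Real.volume_Ioc]
    -- now pure ENNReal/real computation
    have hFθ0' : 0 ≤ F θ := hFθ0
    rcases lt_or_ge a 0 with ha | ha
    · rw [ENNReal.ofReal_eq_zero.mpr (le_trans (min_le_left _ _) ha.le), tsub_zero,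
        max_eq_right ha.le, sub_zero]
    · rw [max_eq_left ha]
      rcases le_or_gt a (F θ) with h1 | h1
      · rw [min_eq_left h1, ← ENNReal.ofReal_sub _ ha]
      · have hbθ : F θ ≤ b := le_trans h1.le hab.le
        rw [min_eq_right h1.le, min_eq_right hbθ, tsub_self]
        exact (ENNReal.ofReal_eq_zero.mpr (by linarith)).symm

/-- Integrability of `(1-F)⁻²` on `Ioc 0 θ` w.r.t. `dF`. -/
lemma int_inv_sq (F : StieltjesFunction ℝ) (hFcont : Continuous F) (hF0 : F 0 = 0)
    {θ : ℝ} (hθ : 0 < θ) (hFθ1 : F θ < 1) :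
    IntegrableOn (fun s => ((1 - F s)⁻¹) ^ 2) (Set.Ioc 0 θ) F.measure := by
  have hFmeas : Measurable F := hFcont.measurable
  have hFθ0 : 0 ≤ F θ := hF0 ▸ F.mono hθ.le
  set g : ℝ → ℝ := fun x => ((1 - x)⁻¹) ^ 2 with hg
  have hgm : Measurable g := ((measurable_const.sub measurable_id).inv.pow_const 2)
  have hne : ∀ x ∈ Set.Icc (0:ℝ) (F θ), (1 - x) ≠ 0 := by
    intro x hx
    have := hx.2
    intro h
    have : x = 1 := by linarith
    linarith [hx.2, this ▸ hFθ1]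
  have hgc : ContinuousOn g (Set.Icc 0 (F θ)) :=
    ((continuousOn_const.sub continuousOn_id).inv₀ hne).pow 2
  have hgi : Integrable g (volume.restrict (Set.Ioc 0 (F θ))) :=
    (hgc.integrableOn_Icc).mono_set Set.Ioc_subset_Icc_self
  rw [← map_stieltjes F hFcont hF0 hθ] at hgi
  exact (integrable_map_measure hgm.aestronglyMeasurable hFmeas.aemeasurable).mp hgi

/-- The key identity `∫₀^θ (1-F)⁻² dF = F θ / (1 - F θ)`. -/
lemma key_integral (F : StieltjesFunction ℝ) (hFcont : Continuous F) (hF0 : F 0 = 0)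
    {θ : ℝ} (hθ : 0 < θ) (hFθ1 : F θ < 1) :
    ∫ s in Set.Ioc 0 θ, ((1 - F s)⁻¹) ^ 2 ∂F.measure = F θ / (1 - F θ) := by
  have hFmeas : Measurable F := hFcont.measurable
  have hFθ0 : 0 ≤ F θ := hF0 ▸ F.mono hθ.le
  set g : ℝ → ℝ := fun x => ((1 - x)⁻¹) ^ 2 with hgdef
  have hgm : Measurable g := ((measurable_const.sub measurable_id).inv.pow_const 2)
  have step1 : ∫ s in Set.Ioc 0 θ, ((1 - F s)⁻¹) ^ 2 ∂F.measure
      = ∫ x, g x ∂(Measure.map F (F.measure.restrict (Set.Ioc 0 θ))) :=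
    (integral_map hFmeas.aemeasurable hgm.aestronglyMeasurable).symm
  rw [step1, map_stieltjes F hFcont hF0 hθ,
    ← intervalIntegral.integral_of_le hFθ0]
  have hne : ∀ x ∈ Set.uIcc (0:ℝ) (F θ), (1 - x) ≠ 0 := by
    rw [Set.uIcc_of_le hFθ0]
    intro x hx h
    have : x = 1 := by linarith
    linarith [hx.2, this ▸ hFθ1]
  have hderiv : ∀ x ∈ Set.uIcc (0:ℝ) (F θ),
      HasDerivAt (fun y => (1 - y)⁻¹) (g x) x := by
    intro x hx
    have h1 : HasDerivAt (fun y : ℝ => 1 - y) (-1) x := (hasDerivAt_id x).const_sub 1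
    have h2 := h1.inv (hne x hx)
    rw [show g x = - -1 / (1 - x) ^ 2 from ?_]
    · exact h2
    rw [hgdef]
    simp only [neg_neg]
    rw [one_div, inv_pow]
  have hintg : IntervalIntegrable g volume 0 (F θ) :=
    (((continuousOn_const.sub continuousOn_id).inv₀ hne).pow 2).intervalIntegrable
  rw [intervalIntegral.integral_eq_sub_of_hasDerivAt hderiv hintg]
  have h1 : (1:ℝ) - F θ ≠ 0 := by
    intro h; have : F θ = 1 := by linarith
    linarith [this ▸ hFθ1]
  field_simp
  ring

end Aux

/-- Cauchy–Schwarz lower bound for the energy of a control `w`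
satisfying the boundary constraint
`(1-F θ)²·(∫₀^θ w/(1-F) dF)² = ε²`, namely
`∫₀^θ w² dF ≥ ε²/(F θ·(1-F θ))`; the bound is attained for `w = l/(1-F)`. -/
theorem stmt15 (F : StieltjesFunction ℝ) (hFcont : Continuous F) (hF0 : F 0 = 0)
    (T θ ε : ℝ) (hθ : θ ∈ Set.Ioc (0:ℝ) T) (hε : 0 < ε)
    (hFθ0 : 0 < F θ) (hFθ1 : F θ < 1)
    (w : ℝ → ℝ) (hw : Measurable w)
    (hwint : IntegrableOn (fun s => (w s) ^ 2) (Set.Ioc 0 θ) F.measure)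
    (hcon : (1 - F θ) ^ 2 * (∫ s in Set.Ioc 0 θ, w s / (1 - F s) ∂F.measure) ^ 2
        = ε ^ 2) :
    ε ^ 2 / (F θ * (1 - F θ)) ≤ ∫ s in Set.Ioc 0 θ, (w s) ^ 2 ∂F.measure
    ∧ ∃ l : ℝ,
        (1 - F θ) ^ 2 * (∫ s in Set.Ioc 0 θ,
            (l / (1 - F s)) / (1 - F s) ∂F.measure) ^ 2 = ε ^ 2
        ∧ (∫ s in Set.Ioc 0 θ, (l / (1 - F s)) ^ 2 ∂F.measure)
            = ε ^ 2 / (F θ * (1 - F θ)) := by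
  have hθ0 : 0 < θ := hθ.1
  have h1F : (0:ℝ) < 1 - F θ := by linarith
  have hK : ∫ s in Set.Ioc 0 θ, ((1 - F s)⁻¹) ^ 2 ∂F.measure = F θ / (1 - F θ) :=
    key_integral F hFcont hF0 hθ0 hFθ1
  have hKint : IntegrableOn (fun s => ((1 - F s)⁻¹) ^ 2) (Set.Ioc 0 θ) F.measure :=
    int_inv_sq F hFcont hF0 hθ0 hFθ1
  have hgm : AEStronglyMeasurable (fun s => (1 - F s)⁻¹)
      (F.measure.restrict (Set.Ioc 0 θ)) :=
    ((measurable_const.sub hFcont.measurable).inv).aestronglyMeasurable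
  have hCS := cs_integral (μ := F.measure.restrict (Set.Ioc 0 θ)) (f := w)
    (g := fun s => (1 - F s)⁻¹) hwint hKint hw.aestronglyMeasurable hgm
  rw [hK] at hCS
  simp_rw [div_eq_mul_inv] at hcon
  set A := ∫ s in Set.Ioc 0 θ, (w s) ^ 2 ∂F.measure with hA
  set C := ∫ s in Set.Ioc 0 θ, w s * (1 - F s)⁻¹ ∂F.measure with hC
  have hA0 : 0 ≤ A := integral_nonneg fun s => sq_nonneg _
  have hεA : ε ^ 2 ≤ A * (F θ * (1 - F θ)) := by
    have h2 : C ^ 2 ≤ A * (F θ / (1 - F θ)) := hCS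
    have h3 : (1 - F θ) ^ 2 * C ^ 2 ≤ (1 - F θ) ^ 2 * (A * (F θ / (1 - F θ))) := by
      apply mul_le_mul_of_nonneg_left h2 (sq_nonneg _)
    rw [hcon] at h3
    calc ε ^ 2 ≤ (1 - F θ) ^ 2 * (A * (F θ / (1 - F θ))) := h3
      _ = A * (F θ * (1 - F θ)) := by field_simp
  constructor
  · rw [div_le_iff₀ (by positivity)]
    linarith [hεA]
  · refine ⟨ε / F θ, ?_, ?_⟩
    · have heq : ∀ s : ℝ, (ε / F θ / (1 - F s)) / (1 - F s)
          = (ε / F θ) * ((1 - F s)⁻¹) ^ 2 := by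
        intro s
        rw [div_div, div_eq_mul_inv, inv_pow, pow_two]
      simp_rw [heq]
      rw [integral_const_mul, hK]
      field_simp
    · have heq : ∀ s : ℝ, (ε / F θ / (1 - F s)) ^ 2
          = (ε / F θ) ^ 2 * ((1 - F s)⁻¹) ^ 2 := by
        intro s
        rw [div_pow, div_eq_mul_inv, inv_pow]
      simp_rw [heq]
      rw [integral_const_mul, hK]
      field_simp
end

section
/- Minimizing ε²/( c·(1 − c) ) over c ∈ (0,1) gives minimum value 4ε², attained at c = 1/2. Consequently, inf over admissible paths u with |u_{θ(u)}| = ε of the rate functional J(u) = (1/2)∫₀^{θ(u)} w² dF equals 2ε², attained when F(θ(u)) = 1/2 and w_s = 2ε/(1 − F(s)). -/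
open MeasureTheory Set


/-- Measure of a superlevel set of a continuous Stieltjes function. -/
lemma superlevel (F : StieltjesFunction ℝ) (hFc : Continuous F) {a b : ℝ} (hab : a ≤ b) (r : ℝ) :
    F.measure ({s | r < F s} ∩ Set.Ioc a b)
      = ENNReal.ofReal (F b - min (max r (F a)) (F b)) := by
  rcases lt_or_ge r (F a) with hr | hr
  · have h1 : {s | r < F s} ∩ Set.Ioc a b = Set.Ioc a b := by
      apply Set.inter_eq_self_of_subset_right
      intro s hs
      exact lt_of_lt_of_le hr (F.mono hs.1.le)
    rw [h1, F.measure_Ioc]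
    congr 1
    rw [max_eq_right hr.le, min_eq_left (F.mono hab)]
  · -- r ≥ F a
    set K : Set ℝ := {s ∈ Set.Icc a b | F s ≤ r} with hK
    have hKne : K.Nonempty := ⟨a, ⟨le_refl a, hab⟩, hr⟩
    have hKbdd : BddAbove K := ⟨b, fun s hs => hs.1.2⟩
    set c := sSup K with hc
    have hcK : c ∈ K := by
      have hKclosed : IsClosed K := by
        have : K = Set.Icc a b ∩ F ⁻¹' (Set.Iic r) := by
          ext s; simp [hK, Set.mem_Icc, and_comm]
        rw [this]
        exact isClosed_Icc.inter (IsClosed.preimage hFc isClosed_Iic)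
      exact hKclosed.csSup_mem hKne hKbdd
    have hca : a ≤ c := hcK.1.1
    have hcb : c ≤ b := hcK.1.2
    have hFcr : F c ≤ r := hcK.2
    have heq : {s | r < F s} ∩ Set.Ioc a b = Set.Ioc c b := by
      ext s
      constructor
      · rintro ⟨hs1, hs2, hs3⟩
        refine ⟨?_, hs3⟩
        by_contra h
        push_neg at h
        exact absurd (le_csSup hKbdd ⟨⟨hs2.le, hs3⟩, (F.mono h).trans hFcr⟩) (not_le.mpr (lt_of_not_ge (fun hsc => absurd ((F.mono hsc).trans hFcr) (not_le.mpr hs1))))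
      · rintro ⟨hs1, hs2⟩
        refine ⟨?_, lt_of_le_of_lt hca hs1, hs2⟩
        simp only [Set.mem_setOf_eq]
        by_contra h
        push_neg at h
        have : s ∈ K := ⟨⟨hca.trans hs1.le, hs2⟩, h⟩
        exact absurd (le_csSup hKbdd this) (not_le.mpr hs1)
    rw [heq, F.measure_Ioc]
    congr 1
    have hFcval : F c = min r (F b) := by
      rcases le_or_gt (F b) r with hbr | hbr
      · -- b ∈ K so c = b
        have : b ∈ K := ⟨⟨hab, le_refl b⟩, hbr⟩
        have hbc : b ≤ c := le_csSup hKbdd this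
        have : c = b := le_antisymm hcb hbc
        rw [this, min_eq_right hbr]
      · -- F c = r via continuity
        rw [min_eq_left hbr.le]
        by_contra hne
        have hlt : F c < r := lt_of_le_of_ne hFcr hne
        have hcltb : c < b := by
          rcases eq_or_lt_of_le hcb with h | h
          · exact absurd (h ▸ hlt) (not_lt.mpr hbr.le)
          · exact h
        have : ∀ᶠ s in nhds c, F s < r := (hFc.continuousAt (x := c)).eventually_lt_const hlt
        obtain ⟨δ, hδ, hδ'⟩ := Metric.eventually_nhds_iff.mp this
        set s := min (c + δ/2) b with hs
        have hsc : c < s := lt_min (by linarith) hcltb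
        have hsK : s ∈ K := by
          refine ⟨⟨hca.trans hsc.le, min_le_right _ _⟩, ?_⟩
          apply le_of_lt
          apply hδ'
          rw [Real.dist_eq, abs_lt]
          constructor
          · have := min_le_left (c + δ/2) b; have : -δ < s - c := by
              have : c < s := hsc; linarith
            linarith [hsc]
          · have h1 : s ≤ c + δ/2 := min_le_left _ _
            linarith
        exact absurd (le_csSup hKbdd hsK) (not_le.mpr hsc)
    rw [hFcval, max_eq_left hr]

lemma stieltjes_map (F : StieltjesFunction ℝ) (hFc : Continuous F) {a b : ℝ} (hab : a ≤ b) :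
    Measure.map F (F.measure.restrict (Set.Ioc a b))
      = volume.restrict (Set.Ioc (F a) (F b)) := by
  have hFm : Measurable F := F.mono.measurable
  refine Measure.ext_of_Ioc' _ _ (fun x y hxy => ?_) (fun x y hxy => ?_)
  · rw [Measure.map_apply hFm measurableSet_Ioc, Measure.restrict_apply (hFm measurableSet_Ioc)]
    exact (measure_mono (Set.inter_subset_right)).trans_lt
      (by rw [F.measure_Ioc]; exact ENNReal.ofReal_lt_top) |>.ne
  · rw [Measure.map_apply hFm measurableSet_Ioc, Measure.restrict_apply (hFm measurableSet_Ioc),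
      Measure.restrict_apply measurableSet_Ioc]
    have hsplit : F ⁻¹' Set.Ioc x y = {s | x < F s} \ {s | y < F s} := by
      ext s; simp [Set.mem_Ioc, Set.mem_diff, not_lt, and_comm]
    have hsub : {s | y < F s} ∩ Set.Ioc a b ⊆ {s | x < F s} ∩ Set.Ioc a b := by
      intro s hs; exact ⟨lt_of_le_of_lt hxy.le hs.1, hs.2⟩
    have hmeas : MeasurableSet ({s | y < F s} ∩ Set.Ioc a b) :=
      (hFm measurableSet_Ioi).inter measurableSet_Ioc
    have hfin : F.measure ({s | y < F s} ∩ Set.Ioc a b) ≠ ⊤ := by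
      rw [superlevel F hFc hab]; exact ENNReal.ofReal_ne_top
    have hdiff : F ⁻¹' Set.Ioc x y ∩ Set.Ioc a b
        = ({s | x < F s} ∩ Set.Ioc a b) \ ({s | y < F s} ∩ Set.Ioc a b) := by
      rw [hsplit]; ext s; simp only [Set.mem_inter_iff, Set.mem_diff, Set.mem_setOf_eq]; tauto
    rw [hdiff, measure_diff hsub hmeas.nullMeasurableSet hfin,
      superlevel F hFc hab, superlevel F hFc hab]
    rw [← ENNReal.ofReal_sub _ (by
      have h1 : min (max y (F a)) (F b) ≤ F b := min_le_right _ _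
      linarith [min_le_right (max y (F a)) (F b)])]
    have harith : F b - min (max x (F a)) (F b) - (F b - min (max y (F a)) (F b))
        = min (max y (F a)) (F b) - min (max x (F a)) (F b) := by ring
    rw [harith]
    have hIoc : Set.Ioc x y ∩ Set.Ioc (F a) (F b) = Set.Ioc (max x (F a)) (min y (F b)) := by
      rw [Set.Ioc_inter_Ioc]
    rw [hIoc, Real.volume_Ioc]
    rcases le_or_gt (F b) (max x (F a)) with h2 | h2
    · rw [min_eq_right h2, min_eq_right (h2.trans (max_le_max hxy.le le_rfl)),
        ENNReal.ofReal_of_nonpos (by linarith [min_le_left (max y (F a)) (F b)]),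
        ENNReal.ofReal_of_nonpos (by linarith [min_le_right y (F b)])]
    · rw [min_eq_left h2.le]
      rcases le_or_gt y (F a) with h5 | h5
      · rw [max_eq_right h5,
          min_eq_left (F.mono hab),
          ENNReal.ofReal_of_nonpos (by linarith [le_max_right x (F a)]),
          ENNReal.ofReal_of_nonpos (by linarith [min_le_left y (F b), le_max_right x (F a)])]
      · rw [max_eq_left h5.le]

lemma stieltjes_integral_comp (F : StieltjesFunction ℝ) (hFc : Continuous F) {a b : ℝ}
    (hab : a ≤ b) {g : ℝ → ℝ} (hg : Measurable g) :
    ∫ s in Set.Ioc a b, g (F s) ∂F.measure = ∫ t in Set.Ioc (F a) (F b), g t := by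
  have : ∫ t in Set.Ioc (F a) (F b), g t
      = ∫ t, g t ∂(Measure.map F (F.measure.restrict (Set.Ioc a b))) := by
    rw [stieltjes_map F hFc hab]
  rw [this, integral_map F.mono.measurable.aemeasurable hg.aestronglyMeasurable]

lemma key_int (F : StieltjesFunction ℝ) (hFc : Continuous F) {a b : ℝ}
    (hab : a ≤ b) (hb : F b < 1) :
    ∫ s in Set.Ioc a b, ((1 - F s)⁻¹) ^ 2 ∂F.measure = (1 - F b)⁻¹ - (1 - F a)⁻¹ := by
  have hg : Measurable fun t : ℝ => ((1 - t)⁻¹) ^ 2 :=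
    ((measurable_const.sub measurable_id).inv).pow_const 2
  rw [stieltjes_integral_comp F hFc hab hg,
    ← intervalIntegral.integral_of_le (F.mono hab)]
  have hne : ∀ t ∈ Set.uIcc (F a) (F b), 1 - t ≠ 0 := by
    intro t ht
    rw [Set.uIcc_of_le (F.mono hab)] at ht
    have := ht.2
    have : t < 1 := lt_of_le_of_lt this hb
    linarith
  have hderiv : ∀ t ∈ Set.uIcc (F a) (F b),
      HasDerivAt (fun t : ℝ => (1 - t)⁻¹) (((1 - t)⁻¹) ^ 2) t := by
    intro t ht
    have h := ((hasDerivAt_id t).const_sub 1).inv (hne t ht)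
    refine h.congr_deriv ?_
    simp [inv_pow]
  have hcont : ContinuousOn (fun t : ℝ => ((1 - t)⁻¹) ^ 2) (Set.uIcc (F a) (F b)) := by
    apply ContinuousOn.pow
    exact ContinuousOn.inv₀ (Continuous.continuousOn (by continuity)) hne
  rw [intervalIntegral.integral_eq_sub_of_hasDerivAt hderiv
    (hcont.intervalIntegrable)]

lemma lower_bound (ε : ℝ) (hε : 0 < ε)
    (F : StieltjesFunction ℝ) (hFcont : Continuous F) (hF0 : F 0 = 0)
    (T : ℝ) (hFT : F T < 1)
    (θ : ℝ) (hθ : θ ∈ Set.Ioc (0:ℝ) T) (w : ℝ → ℝ) (hwm : Measurable w)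
    (hw2 : IntegrableOn (fun s => (w s) ^ 2) (Set.Ioc 0 θ) F.measure)
    (hcon : (1 - F θ) ^ 2 * (∫ s in Set.Ioc 0 θ, w s / (1 - F s) ∂F.measure) ^ 2 = ε ^ 2) :
    2 * ε ^ 2 ≤ (1/2) * ∫ s in Set.Ioc 0 θ, (w s) ^ 2 ∂F.measure := by
  set μ := F.measure.restrict (Set.Ioc 0 θ) with hμ
  haveI : IsFiniteMeasure μ :=
    ⟨by rw [hμ, Measure.restrict_apply_univ, F.measure_Ioc]; exact ENNReal.ofReal_lt_top⟩
  have hc1 : F θ < 1 := lt_of_le_of_lt (F.mono hθ.2) hFT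
  have hc0 : 0 ≤ F θ := by rw [← hF0]; exact F.mono hθ.1.le
  have hgpos : ∀ s ∈ Set.Ioc (0:ℝ) θ, 0 < 1 - F s := by
    intro s hs
    have := F.mono hs.2
    linarith
  have hae : ∀ᵐ s ∂μ, s ∈ Set.Ioc (0:ℝ) θ := ae_restrict_mem measurableSet_Ioc
  have h2 : (ENNReal.ofReal 2) = 2 := by norm_num
  -- MemLp facts
  have hfL2 : MemLp w (ENNReal.ofReal 2) μ := by
    rw [h2]
    exact (memLp_two_iff_integrable_sq hwm.aestronglyMeasurable).mpr hw2
  have hgmeas : Measurable fun s : ℝ => (1 - F s)⁻¹ :=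
    (measurable_const.sub F.mono.measurable).inv
  have hgL2 : MemLp (fun s : ℝ => (1 - F s)⁻¹) (ENNReal.ofReal 2) μ := by
    apply MemLp.of_bound hgmeas.aestronglyMeasurable ((1 - F θ)⁻¹)
    filter_upwards [hae] with s hs
    rw [Real.norm_eq_abs, abs_of_nonneg (inv_pos.mpr (hgpos s hs)).le]
    have h1 : (0:ℝ) < 1 - F θ := by linarith
    have h2' : 1 - F θ ≤ 1 - F s := by linarith [F.mono hs.2]
    exact inv_anti₀ h1 h2'
  -- Cauchy-Schwarz
  have hpq : Real.HolderConjugate 2 2 := Real.HolderConjugate.two_two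
  have hCS := integral_mul_norm_le_Lp_mul_Lq (μ := μ) hpq hfL2 hgL2
  set I := ∫ s in Set.Ioc (0:ℝ) θ, w s / (1 - F s) ∂F.measure with hI
  set A := ∫ s in Set.Ioc (0:ℝ) θ, (w s) ^ 2 ∂F.measure with hA
  set B := ∫ s in Set.Ioc (0:ℝ) θ, ((1 - F s)⁻¹) ^ 2 ∂F.measure with hB
  have hA0 : 0 ≤ A := integral_nonneg fun s => sq_nonneg _
  have hB0 : 0 ≤ B := integral_nonneg fun s => sq_nonneg _
  have hBval : B = (1 - F θ)⁻¹ - 1 := by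
    rw [hB, key_int F hFcont hθ.1.le hc1, hF0]
    norm_num
  -- rewrite the rpow-integrals
  have hwint : ∫ s, ‖w s‖ ^ (2:ℝ) ∂μ = A := by
    rw [hA]
    apply integral_congr_ae
    filter_upwards with s
    rw [Real.norm_eq_abs, show (2:ℝ) = ((2:ℕ):ℝ) by norm_num, Real.rpow_natCast, sq_abs]
  have hgint : ∫ s, ‖(1 - F s)⁻¹‖ ^ (2:ℝ) ∂μ = B := by
    rw [hB]
    apply integral_congr_ae
    filter_upwards with s
    rw [Real.norm_eq_abs, show (2:ℝ) = ((2:ℕ):ℝ) by norm_num, Real.rpow_natCast, sq_abs]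
  rw [hwint, hgint] at hCS
  have habs : |I| ≤ ∫ s, ‖w s‖ * ‖(1 - F s)⁻¹‖ ∂μ := by
    have h1 : |I| ≤ ∫ s, ‖w s / (1 - F s)‖ ∂μ := by
      rw [hI]
      exact norm_integral_le_integral_norm (f := fun s => w s / (1 - F s))
    refine h1.trans (le_of_eq (integral_congr_ae ?_))
    filter_upwards with s
    rw [div_eq_mul_inv, norm_mul]
  have hchain : |I| ≤ A ^ ((1:ℝ)/2) * B ^ ((1:ℝ)/2) := habs.trans hCS
  have hsq : I ^ 2 ≤ A * B := by
    have h1 : |I| ^ 2 ≤ (A ^ ((1:ℝ)/2) * B ^ ((1:ℝ)/2)) ^ 2 :=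
      pow_le_pow_left₀ (abs_nonneg I) hchain 2
    rw [sq_abs] at h1
    refine h1.trans (le_of_eq ?_)
    rw [mul_pow, ← Real.rpow_natCast (A ^ ((1:ℝ)/2)) 2, ← Real.rpow_natCast (B ^ ((1:ℝ)/2)) 2,
      ← Real.rpow_mul hA0, ← Real.rpow_mul hB0]
    norm_num
  -- final arithmetic
  have hεle : ε ^ 2 ≤ (1 - F θ) ^ 2 * (A * ((1 - F θ)⁻¹ - 1)) := by
    rw [← hBval, ← hcon]
    exact mul_le_mul_of_nonneg_left hsq (sq_nonneg _)
  have hrw : (1 - F θ) ^ 2 * (A * ((1 - F θ)⁻¹ - 1)) = A * (F θ * (1 - F θ)) := by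
    have h1 : (1 - F θ) ≠ 0 := by linarith
    field_simp
    ring
  rw [hrw] at hεle
  nlinarith [sq_nonneg (F θ - 1/2), mul_nonneg hA0 (mul_nonneg hc0 (by linarith : (0:ℝ) ≤ 1 - F θ))]

/-- minimizing `ε²/(c(1-c))` over `c ∈ (0,1)` gives `4ε²`, attained at
`c = 1/2`; consequently the infimum of the rate functional
`J(u) = (1/2)∫₀^θ w² dF` over admissible controls with boundary value `±ε`
equals `2ε²`, attained when `F θ = 1/2` and `w = 2ε/(1-F)`. -/
theorem stmt16 (ε : ℝ) (hε : 0 < ε)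
    (F : StieltjesFunction ℝ) (hFcont : Continuous F) (hF0 : F 0 = 0)
    (T : ℝ) (hT : 0 < T) (hFT : F T < 1) (hFThalf : 1/2 ≤ F T) :
    (∀ c ∈ Set.Ioo (0:ℝ) 1, 4 * ε ^ 2 ≤ ε ^ 2 / (c * (1 - c)))
    ∧ ε ^ 2 / ((1/2 : ℝ) * (1 - 1/2)) = 4 * ε ^ 2
    ∧ sInf { J : ℝ | ∃ θ ∈ Set.Ioc (0:ℝ) T, ∃ w : ℝ → ℝ,
        Measurable w
        ∧ IntegrableOn (fun s => (w s) ^ 2) (Set.Ioc 0 θ) F.measure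
        ∧ (1 - F θ) ^ 2 * (∫ s in Set.Ioc 0 θ, w s / (1 - F s) ∂F.measure) ^ 2
            = ε ^ 2
        ∧ J = (1/2) * ∫ s in Set.Ioc 0 θ, (w s) ^ 2 ∂F.measure }
      = 2 * ε ^ 2 := by
  refine ⟨?_, by rw [div_eq_iff (by norm_num : ((1:ℝ)/2*(1-1/2)) ≠ 0)]; ring, ?_⟩
  · intro c hc
    rw [le_div_iff₀ (by nlinarith [hc.1, hc.2] : (0:ℝ) < c * (1 - c))]
    nlinarith [sq_nonneg (c - 1/2), sq_nonneg ε]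
  · set S := { J : ℝ | ∃ θ ∈ Set.Ioc (0:ℝ) T, ∃ w : ℝ → ℝ,
        Measurable w
        ∧ IntegrableOn (fun s => (w s) ^ 2) (Set.Ioc 0 θ) F.measure
        ∧ (1 - F θ) ^ 2 * (∫ s in Set.Ioc 0 θ, w s / (1 - F s) ∂F.measure) ^ 2
            = ε ^ 2
        ∧ J = (1/2) * ∫ s in Set.Ioc 0 θ, (w s) ^ 2 ∂F.measure } with hS
    have hlb : ∀ J ∈ S, 2 * ε ^ 2 ≤ J := by
      rintro J ⟨θ, hθ, w, hwm, hw2, hcon, rfl⟩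
      exact lower_bound ε hε F hFcont hF0 T hFT θ hθ w hwm hw2 hcon
    -- attainment
    have hmem : (2 * ε ^ 2) ∈ S := by
      obtain ⟨θ, hθmem, hθval⟩ : ∃ θ ∈ Set.Icc (0:ℝ) T, F θ = 1/2 := by
        have := intermediate_value_Icc hT.le hFcont.continuousOn
        have h12 : (1/2 : ℝ) ∈ Set.Icc (F 0) (F T) := by
          rw [hF0]; exact ⟨by norm_num, hFThalf⟩
        exact this h12
      have hθpos : 0 < θ := by
        rcases eq_or_lt_of_le hθmem.1 with h | h
        · exfalso; rw [← h, hF0] at hθval; norm_num at hθval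
        · exact h
      set w : ℝ → ℝ := fun s => 2 * ε * (1 - F s)⁻¹ with hw
      have hwm : Measurable w :=
        (measurable_const.mul ((measurable_const.sub F.mono.measurable).inv))
      have hc1 : F θ < 1 := by rw [hθval]; norm_num
      have hkey : ∫ s in Set.Ioc (0:ℝ) θ, ((1 - F s)⁻¹) ^ 2 ∂F.measure = 1 := by
        rw [key_int F hFcont hθpos.le hc1, hθval, hF0]
        norm_num
      haveI : IsFiniteMeasure (F.measure.restrict (Set.Ioc 0 θ)) :=
        ⟨by rw [Measure.restrict_apply_univ, F.measure_Ioc]; exact ENNReal.ofReal_lt_top⟩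
      have hgpos : ∀ s ∈ Set.Ioc (0:ℝ) θ, (1:ℝ)/2 ≤ 1 - F s := by
        intro s hs
        have := F.mono hs.2
        rw [hθval] at this
        linarith
      have hw2 : IntegrableOn (fun s => (w s) ^ 2) (Set.Ioc 0 θ) F.measure := by
        rw [IntegrableOn, ← memLp_one_iff_integrable]
        apply MemLp.of_bound ((hwm.pow_const 2).aestronglyMeasurable) (16 * ε ^ 2)
        filter_upwards [ae_restrict_mem (measurableSet_Ioc : MeasurableSet (Set.Ioc (0:ℝ) θ))]
          with s hs
        have h1 := hgpos s hs
        have h2 : (1 - F s)⁻¹ ≤ 2 := by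
          rw [inv_le_comm₀ (by linarith) (by norm_num)]
          linarith
        have h3 : 0 ≤ (1 - F s)⁻¹ := inv_nonneg.mpr (by linarith)
        rw [Real.norm_eq_abs, abs_of_nonneg (sq_nonneg _)]
        show (2 * ε * (1 - F s)⁻¹) ^ 2 ≤ 16 * ε ^ 2
        nlinarith [mul_nonneg (mul_nonneg (by linarith : (0:ℝ) ≤ 2 - (1 - F s)⁻¹)
          (by linarith : (0:ℝ) ≤ 2 + (1 - F s)⁻¹)) (sq_nonneg ε)]
      refine ⟨θ, ⟨hθpos, hθmem.2⟩, w, hwm, hw2, ?_, ?_⟩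
      · have heq : ∀ s, w s / (1 - F s) = 2 * ε * ((1 - F s)⁻¹) ^ 2 := by
          intro s
          rw [hw, div_eq_mul_inv, mul_assoc, sq]
        rw [show (∫ s in Set.Ioc (0:ℝ) θ, w s / (1 - F s) ∂F.measure)
            = ∫ s in Set.Ioc (0:ℝ) θ, 2 * ε * ((1 - F s)⁻¹) ^ 2 ∂F.measure from
            integral_congr_ae (Filter.Eventually.of_forall fun s => heq s),
          integral_const_mul, hkey, hθval]
        ring
      · have heq2 : ∀ s, w s ^ 2 = 4 * ε ^ 2 * ((1 - F s)⁻¹) ^ 2 := by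
          intro s; rw [hw]; ring
        rw [show (∫ s in Set.Ioc (0:ℝ) θ, (w s) ^ 2 ∂F.measure)
            = ∫ s in Set.Ioc (0:ℝ) θ, 4 * ε ^ 2 * ((1 - F s)⁻¹) ^ 2 ∂F.measure from
            integral_congr_ae (Filter.Eventually.of_forall fun s => heq2 s),
          integral_const_mul, hkey]
        ring
    exact le_antisymm (csInf_le ⟨2 * ε ^ 2, hlb⟩ hmem) (le_csInf ⟨_, hmem⟩ hlb)
end
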